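/- Let G be a 2-connected finite simple graph with path-width at most 2 and let C be a longest cycle of G. Then every bridge of C is trivial, that is, it is either a single edge joining two vertices of C, or a path of length two between two vertices of C whose middle vertex does not lie on C. -/

import Mathlib

open SimpleGraph

universe u v

/-- A path-decomposition of a simple graph: a finite sequence of bags covering all vertices
and edges, such that bags containing a fixed vertex occur consecutively. -/
structure PathDecomp {V : Type u} (G : SimpleGraph V) where
  n : ℕ
  bag : Fin n → Finset V
  mem_bag : ∀ v : V, ∃ i, v ∈ bag i
  edge_bag : ∀ ⦃u w : V⦄, G.Adj u w → ∃ i, u ∈ bag i ∧ w ∈ bag i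
  interp : ∀ i j k : Fin n, i ≤ j → j ≤ k → ∀ v : V, v ∈ bag i → v ∈ bag k → v ∈ bag j

/-- The width of a path-decomposition: (maximal bag size) - 1. -/
def PathDecomp.width {V : Type u} {G : SimpleGraph V} (D : PathDecomp G) : ℕ :=
  (Finset.univ.sup fun i => (D.bag i).card) - 1

/-- The path-width of a graph: the minimum width of a path-decomposition. -/
noncomputable def pathWidth {V : Type u} (G : SimpleGraph V) : ℕ :=
  sInf {w | ∃ D : PathDecomp G, D.width = w}

/-- `IsMinor G H` : `H` is a minor of `G`, witnessed by a family of pairwise disjoint nonempty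
connected branch sets in `G` indexed by the vertices of `H`. -/
def IsMinor {V : Type u} {W : Type v} (G : SimpleGraph V) (H : SimpleGraph W) : Prop :=
  ∃ B : W → Set V,
    (∀ w, (B w).Nonempty) ∧
    (Pairwise fun w w' => Disjoint (B w) (B w')) ∧
    (∀ w, (G.induce (B w)).Connected) ∧
    (∀ ⦃w w'⦄, H.Adj w w' → ∃ u ∈ B w, ∃ u' ∈ B w', G.Adj u u')

/-- A graph is 2-connected if it has at least 3 vertices and deleting any vertex leaves it
connected. -/
def TwoConnected {V : Type u} (G : SimpleGraph V) : Prop :=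
  3 ≤ Nat.card V ∧ ∀ v : V, (G.induce ({v}ᶜ : Set V)).Connected

/-- A graph is 2-edge-connected if it is connected, has at least 2 vertices, and deleting any
edge leaves it connected. -/
def TwoEdgeConnected {V : Type u} (G : SimpleGraph V) : Prop :=
  G.Connected ∧ 2 ≤ Nat.card V ∧ ∀ e ∈ G.edgeSet, (G.deleteEdges {e}).Connected

/-- A track representation of a graph `G`: two disjoint paths `p 0, …, p (k-1)` and
`q 0, …, q (l-1)`, short chords (edges `p i — q j`) and long chords (paths `p i — m — q j`
with middle vertex `m ∈ M`, recorded by `ends m = (i, j)`), the chords pairwise non-crossing,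
with a chord joining the first vertices of the two paths and a chord joining the last ones;
the vertices of `G` are exactly those of the two paths plus the middle vertices, and the
edges of `G` are exactly the path edges and the chord edges. -/
structure TrackRep {V : Type u} (G : SimpleGraph V) where
  k : ℕ
  l : ℕ
  kpos : 0 < k
  lpos : 0 < l
  p : Fin k → V
  q : Fin l → V
  short : Set (Fin k × Fin l)
  M : Set V
  ends : V → Fin k × Fin l
  M_fin : M.Finite
  p_inj : Function.Injective p
  q_inj : Function.Injective q
  p_ne_q : ∀ i j, p i ≠ q j
  M_ne_p : ∀ ⦃m⦄, m ∈ M → ∀ i, m ≠ p i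
  M_ne_q : ∀ ⦃m⦄, m ∈ M → ∀ j, m ≠ q j
  vert_cover : ∀ x : V, (∃ i, x = p i) ∨ (∃ j, x = q j) ∨ x ∈ M
  noncross : ∀ c ∈ short ∪ ends '' M, ∀ c' ∈ short ∪ ends '' M,
      0 ≤ (((c.1 : ℕ) : ℤ) - ((c'.1 : ℕ) : ℤ)) * (((c.2 : ℕ) : ℤ) - ((c'.2 : ℕ) : ℤ))
  first_chord : (⟨0, kpos⟩, ⟨0, lpos⟩) ∈ short ∪ ends '' M
  last_chord : (⟨k - 1, Nat.sub_lt kpos Nat.one_pos⟩, ⟨l - 1, Nat.sub_lt lpos Nat.one_pos⟩)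
      ∈ short ∪ ends '' M
  adj_iff : ∀ u w : V, G.Adj u w ↔
      (∃ i j : Fin k, ((i : ℕ) + 1 = (j : ℕ) ∨ (j : ℕ) + 1 = (i : ℕ)) ∧ u = p i ∧ w = p j) ∨
      (∃ i j : Fin l, ((i : ℕ) + 1 = (j : ℕ) ∨ (j : ℕ) + 1 = (i : ℕ)) ∧ u = q i ∧ w = q j) ∨
      (∃ c ∈ short, (u = p c.1 ∧ w = q c.2) ∨ (u = q c.2 ∧ w = p c.1)) ∨
      (∃ m ∈ M, (u = m ∧ (w = p (ends m).1 ∨ w = q (ends m).2)) ∨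
                (w = m ∧ (u = p (ends m).1 ∨ u = q (ends m).2)))

/-- A graph is a track if it admits a track representation. -/
def IsTrack {V : Type u} (G : SimpleGraph V) : Prop := Nonempty (TrackRep G)

/-- A graph is a partial track if it is (isomorphic to) a subgraph of a track. -/
def IsPartialTrack {V : Type u} (G : SimpleGraph V) : Prop :=
  ∃ (W : Type) (T : SimpleGraph W) (f : V → W),
    IsTrack T ∧ Function.Injective f ∧ ∀ ⦃a b : V⦄, G.Adj a b → T.Adj (f a) (f b)

/-- `r` can play the role of a corner of `G`: some track representation of `G` has `r`
as one of the four corners `p₁, p_k, q₁, q_ℓ`. -/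
def CanBeCorner {V : Type u} (G : SimpleGraph V) (r : V) : Prop :=
  ∃ T : TrackRep G,
    r = T.p ⟨0, T.kpos⟩ ∨ r = T.p ⟨T.k - 1, Nat.sub_lt T.kpos Nat.one_pos⟩ ∨
    r = T.q ⟨0, T.lpos⟩ ∨ r = T.q ⟨T.l - 1, Nat.sub_lt T.lpos Nat.one_pos⟩

/-- `r` and `r'` can play the role of opposite corners of `G`. -/
def CanBeOppositeCorners {V : Type u} (G : SimpleGraph V) (r r' : V) : Prop :=
  ∃ T : TrackRep G,
    (r = T.p ⟨0, T.kpos⟩ ∨ r = T.q ⟨0, T.lpos⟩) ∧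
    (r' = T.p ⟨T.k - 1, Nat.sub_lt T.kpos Nat.one_pos⟩ ∨
     r' = T.q ⟨T.l - 1, Nat.sub_lt T.lpos Nat.one_pos⟩)

/-- `r` can play the role of a degenerate side of `G`: some track representation has `k = 1`
and `p₁ = r`. -/
def CanBeDegenerateSide {V : Type u} (G : SimpleGraph V) (r : V) : Prop :=
  ∃ T : TrackRep G, T.k = 1 ∧ r = T.p ⟨0, T.kpos⟩

/-- Two edges are equal or lie on a common cycle. -/
def OnCommonCycle {V : Type u} (G : SimpleGraph V) (e f : Sym2 V) : Prop :=
  e = f ∨ ∃ (x : V) (c : G.Walk x x), c.IsCycle ∧ e ∈ c.edges ∧ f ∈ c.edges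

/-- The subgraph of `G` spanned by a set `F` of edges. -/
def edgeSpan {V : Type u} (G : SimpleGraph V) (F : Set (Sym2 V)) : G.Subgraph where
  verts := {a | ∃ b, G.Adj a b ∧ s(a, b) ∈ F}
  Adj a b := G.Adj a b ∧ s(a, b) ∈ F
  adj_sub h := h.1
  edge_vert h := ⟨_, h.1, h.2⟩
  symm := ⟨fun a b h => ⟨h.1.symm, by rw [Sym2.eq_swap]; exact h.2⟩⟩

/-- `B` is a block of `G`: the subgraph spanned by an equivalence class of edges under the
relation "being equal or lying on a common cycle". -/
def IsBlock {V : Type u} (G : SimpleGraph V) (B : G.Subgraph) : Prop :=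
  ∃ e ∈ G.edgeSet, B = edgeSpan G {f | OnCommonCycle G e f}

/-- A cut vertex: a vertex whose removal disconnects the (connected) graph. -/
def IsCutVertex {V : Type u} (G : SimpleGraph V) (v : V) : Prop :=
  G.Connected ∧ ¬ (G.induce ({v}ᶜ : Set V)).Connected

/-- The subgraph `B` of `G` (as an abstract graph) is a track. -/
def SubIsTrack {V : Type u} {G : SimpleGraph V} (B : G.Subgraph) : Prop :=
  IsTrack B.coe

/-- The vertex `r` can play the role of a corner of the subgraph `B`. -/
def SubCanBeCorner {V : Type u} {G : SimpleGraph V} (B : G.Subgraph) (r : V) : Prop :=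
  ∃ h : r ∈ B.verts, CanBeCorner B.coe ⟨r, h⟩

/-- The vertices `r, r'` can play the role of opposite corners of the subgraph `B`. -/
def SubCanBeOppositeCorners {V : Type u} {G : SimpleGraph V} (B : G.Subgraph)
    (r r' : V) : Prop :=
  ∃ (h : r ∈ B.verts) (h' : r' ∈ B.verts), CanBeOppositeCorners B.coe ⟨r, h⟩ ⟨r', h'⟩

/-- The vertex `r` can play the role of a degenerate side of the subgraph `B`. -/
def SubCanBeDegenerateSide {V : Type u} {G : SimpleGraph V} (B : G.Subgraph) (r : V) : Prop :=
  ∃ h : r ∈ B.verts, CanBeDegenerateSide B.coe ⟨r, h⟩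

/-- `C` is a longest cycle of `G`. -/
def IsLongestCycle {V : Type u} (G : SimpleGraph V) {x : V} (C : G.Walk x x) : Prop :=
  C.IsCycle ∧ ∀ (y : V) (D : G.Walk y y), D.IsCycle → D.length ≤ C.length

/-- `N` is (the vertex set of) a connected component of `G − S`. -/
def IsCompOf {V : Type u} (G : SimpleGraph V) (S N : Set V) : Prop :=
  N.Nonempty ∧ N ⊆ Sᶜ ∧ (G.induce N).Connected ∧
    ∀ a ∈ N, ∀ b, b ∉ S → G.Adj a b → b ∈ N

/-- The subgraph consisting of all edges of `G` incident to a vertex of `N`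
(together with their endpoints). -/
def bridgeFromComp {V : Type u} (G : SimpleGraph V) (N : Set V) : G.Subgraph where
  verts := {a | ∃ b, G.Adj a b ∧ (a ∈ N ∨ b ∈ N)}
  Adj a b := G.Adj a b ∧ (a ∈ N ∨ b ∈ N)
  adj_sub h := h.1
  edge_vert h := ⟨_, h.1, h.2⟩
  symm := ⟨fun a b h => ⟨h.1.symm, h.2.symm⟩⟩

/-- `B` is a bridge of the cycle `C` in `G`: either the subgraph of all edges incident to a
component of `G − V(C)`, or a single edge of `G` joining two vertices of `C` and not lying
on `C`. -/
def IsBridgeOf {V : Type u} (G : SimpleGraph V) {x : V} (C : G.Walk x x)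
    (B : G.Subgraph) : Prop :=
  (∃ N : Set V, IsCompOf G {a | a ∈ C.support} N ∧ B = bridgeFromComp G N) ∨
  (∃ (a b : V) (h : G.Adj a b), a ∈ C.support ∧ b ∈ C.support ∧ s(a, b) ∉ C.edges ∧
      B = G.subgraphOfAdj h)

/-- The legs of a bridge `B` of a cycle `C`: the vertices of `B` lying on `C`. -/
def legs {V : Type u} {G : SimpleGraph V} {x : V} (C : G.Walk x x) (B : G.Subgraph) : Set V :=
  {a | a ∈ B.verts ∧ a ∈ C.support}

/-- `z` lies strictly between `a` and `b` in the linear order given by the list `L`. -/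
def posBetween {V : Type u} [DecidableEq V] (L : List V) (a b z : V) : Prop :=
  (L.idxOf a < L.idxOf z ∧ L.idxOf z < L.idxOf b) ∨
  (L.idxOf b < L.idxOf z ∧ L.idxOf z < L.idxOf a)

/-- The pairs `{a₁, a₂}` and `{b₁, b₂}` are crossing pairs on the cyclic order given by the
list `L`: the pairs are disjoint pairs of distinct vertices and the four vertices alternate
cyclically (equivalently, exactly one of `b₁, b₂` lies strictly between `a₁` and `a₂`). -/
def CrossingPairs {V : Type u} [DecidableEq V] (L : List V) (a₁ a₂ b₁ b₂ : V) : Prop :=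
  a₁ ≠ a₂ ∧ b₁ ≠ b₂ ∧ a₁ ≠ b₁ ∧ a₁ ≠ b₂ ∧ a₂ ≠ b₁ ∧ a₂ ≠ b₂ ∧
    Xor' (posBetween L a₁ a₂ b₁) (posBetween L a₁ a₂ b₂)

/-- Two bridges of a cycle `C` cross: some pair of legs of one and some pair of legs of the
other are crossing pairs along `C`. -/
def BridgesCross {V : Type u} [DecidableEq V] {G : SimpleGraph V} {x : V} (C : G.Walk x x)
    (B₁ B₂ : G.Subgraph) : Prop :=
  ∃ a₁ ∈ legs C B₁, ∃ a₂ ∈ legs C B₁, ∃ b₁ ∈ legs C B₂, ∃ b₂ ∈ legs C B₂,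
    CrossingPairs C.support.tail a₁ a₂ b₁ b₂

section Helpers

variable {V : Type u} {G : SimpleGraph V}

/-- `S` is walk-connected in `G`. -/
def Wkb (G : SimpleGraph V) (S : Set V) : Prop :=
  ∀ u ∈ S, ∀ v ∈ S, ∃ p : G.Walk u v, ∀ z ∈ p.support, z ∈ S

lemma walk_between {x y : V} (p : G.Walk x y) {s t : V}
    (hs : s ∈ p.support) (ht : t ∈ p.support) :
    ∃ w : G.Walk s t, ∀ z ∈ w.support, z ∈ p.support := by
  classical
  have ht' : t ∈ ((p.takeUntil s hs).reverse.append p).support := by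
    rw [Walk.mem_support_append_iff]; exact Or.inr ht
  refine ⟨((p.takeUntil s hs).reverse.append p).takeUntil t ht', fun z hz => ?_⟩
  have := Walk.support_takeUntil_subset _ ht' hz
  rw [Walk.mem_support_append_iff] at this
  rcases this with h | h
  · rw [Walk.support_reverse, List.mem_reverse] at h
    exact Walk.support_takeUntil_subset _ hs h
  · exact h

lemma wkb_of_walk {x y : V} (p : G.Walk x y) : Wkb G {v | v ∈ p.support} := by
  intro u hu v hv
  exact walk_between p hu hv

lemma wkb_singleton (a : V) : Wkb G {a} := by
  rintro u rfl v rfl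
  exact ⟨Walk.nil, by simp⟩

lemma wkb_of_connected_induce {S : Set V} (h : (G.induce S).Connected) : Wkb G S := by
  intro u hu v hv
  obtain ⟨w⟩ := h.preconnected ⟨u, hu⟩ ⟨v, hv⟩
  let f : G.induce S →g G := ⟨Subtype.val, fun {a b} hab => hab⟩
  refine ⟨(w.map f).copy rfl rfl, fun z hz => ?_⟩
  rw [Walk.support_copy, Walk.support_map] at hz
  obtain ⟨⟨z', hz'⟩, _, rfl⟩ := List.mem_map.mp hz
  exact hz'

lemma touch_int_aux (D : PathDecomp G) {S : Set V} {j k : Fin D.n} (hjk : j ≤ k) :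
    ∀ {u w : V} (p : G.Walk u w), (∀ z ∈ p.support, z ∈ S) →
    ∀ {i : Fin D.n}, i ≤ j → u ∈ D.bag i → w ∈ D.bag k → ∃ x ∈ D.bag j, x ∈ S := by
  intro u w p
  induction p with
  | nil =>
    intro hp i hij hu hw
    exact ⟨_, D.interp i j k hij hjk _ hu hw, hp _ (Walk.start_mem_support _)⟩
  | @cons a b c hadj q ih =>
    intro hp i hij hu hw
    obtain ⟨m, ham, hbm⟩ := D.edge_bag hadj
    rcases le_total j m with hjm | hmj
    · exact ⟨a, D.interp i j m hij hjm a hu ham, hp a (Walk.start_mem_support _)⟩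
    · exact ih (fun z hz => hp z (by simp [hz])) hmj hbm hw

/-- interval property for touching a walk-connected set -/
lemma touch_int (D : PathDecomp G) {S : Set V} (hS : Wkb G S) {i j k : Fin D.n}
    (hij : i ≤ j) (hjk : j ≤ k)
    (hi : ∃ x ∈ D.bag i, x ∈ S) (hk : ∃ x ∈ D.bag k, x ∈ S) :
    ∃ x ∈ D.bag j, x ∈ S := by
  obtain ⟨u, hu, huS⟩ := hi
  obtain ⟨w, hw, hwS⟩ := hk
  obtain ⟨p, hp⟩ := hS u huS w hwS
  exact touch_int_aux D hjk p hp hij hu hw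

lemma four_le_card [DecidableEq V] {s : Finset V} {v1 v2 v3 v4 : V}
    (h1 : v1 ∈ s) (h2 : v2 ∈ s) (h3 : v3 ∈ s) (h4 : v4 ∈ s)
    (h12 : v1 ≠ v2) (h13 : v1 ≠ v3) (h14 : v1 ≠ v4)
    (h23 : v2 ≠ v3) (h24 : v2 ≠ v4) (h34 : v3 ≠ v4) : 4 ≤ s.card := by
  have hsub : ({v1, v2, v3, v4} : Finset V) ⊆ s := by
    intro z hz
    simp only [Finset.mem_insert, Finset.mem_singleton] at hz
    rcases hz with rfl | rfl | rfl | rfl <;> assumption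
  have hcard : ({v1, v2, v3, v4} : Finset V).card = 4 := by
    rw [Finset.card_insert_of_notMem (by simp [h12, h13, h14]),
      Finset.card_insert_of_notMem (by simp [h23, h24]),
      Finset.card_insert_of_notMem (by simp [h34]), Finset.card_singleton]
  calc 4 = ({v1, v2, v3, v4} : Finset V).card := hcard.symm
    _ ≤ s.card := Finset.card_le_card hsub
  
end Helpers
section Theta

variable {V : Type u} {G : SimpleGraph V}

/-- Labels: 0 = A, 1 = B, 2 = X1, 3 = Y1, 4 = X2, 5 = Y2, 6 = X3, 7 = Y3. -/
lemma theta_core {ι : Type} [LinearOrder ι] (T : Fin 8 → ι → Prop)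
    (hint : ∀ t : Fin 8, ∀ ⦃i j k : ι⦄, i ≤ j → j ≤ k → T t i → T t k → T t j)
    (hfour : ∀ (i : ι) (t₁ t₂ t₃ t₄ : Fin 8), t₁ ≠ t₂ → t₁ ≠ t₃ → t₁ ≠ t₄ →
      t₂ ≠ t₃ → t₂ ≠ t₄ → t₃ ≠ t₄ → T t₁ i → T t₂ i → T t₃ i → T t₄ i → False)
    {α1 α2 α3 m1 m2 m3 β1 β2 β3 : ι}
    (hα1 : T 0 α1 ∧ T 2 α1) (hα2 : T 0 α2 ∧ T 4 α2) (hα3 : T 0 α3 ∧ T 6 α3)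
    (hm1 : T 2 m1 ∧ T 3 m1) (hm2 : T 4 m2 ∧ T 5 m2) (hm3 : T 6 m3 ∧ T 7 m3)
    (hβ1 : T 3 β1 ∧ T 1 β1) (hβ2 : T 5 β2 ∧ T 1 β2) (hβ3 : T 7 β3 ∧ T 1 β3)
    (h12 : m1 ≤ m2) (h23 : m2 ≤ m3) (ha1 : α1 ≤ m2) (ha3 : α3 ≤ m2) : False := by
  have hX2 : T 4 m2 := hm2.1
  have hY2 : T 5 m2 := hm2.2
  have hX3 : T 6 m2 := hint 6 ha3 h23 hα3.2 hm3.1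
  rcases le_total β3 m2 with hb3 | hb3
  · have hY3 : T 7 m2 := hint 7 hb3 h23 hβ3.1 hm3.2
    exact hfour m2 4 5 6 7 (by decide) (by decide) (by decide) (by decide) (by decide)
      (by decide) hX2 hY2 hX3 hY3
  · rcases le_total β2 m2 with hb2 | hb2
    · have hB : T 1 m2 := hint 1 hb2 hb3 hβ2.2 hβ3.2
      exact hfour m2 4 5 6 1 (by decide) (by decide) (by decide) (by decide) (by decide)
        (by decide) hX2 hY2 hX3 hB
    · rcases le_total m2 α2 with ha2 | ha2
      · have hA : T 0 m2 := hint 0 ha1 ha2 hα1.1 hα2.1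
        exact hfour m2 4 5 6 0 (by decide) (by decide) (by decide) (by decide) (by decide)
          (by decide) hX2 hY2 hX3 hA
      · rcases le_total β1 m2 with hb1 | hb1
        · have hB : T 1 m2 := hint 1 hb1 hb2 hβ1.2 hβ2.2
          exact hfour m2 4 5 6 1 (by decide) (by decide) (by decide) (by decide) (by decide)
            (by decide) hX2 hY2 hX3 hB
        · have hY1 : T 3 m2 := hint 3 h12 hb1 hm1.2 hβ1.1
          exact hfour m2 4 5 6 3 (by decide) (by decide) (by decide) (by decide) (by decide)
            (by decide) hX2 hY2 hX3 hY1

lemma theta_straddle {ι : Type} [LinearOrder ι] (T : Fin 8 → ι → Prop)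
    (hint : ∀ t : Fin 8, ∀ ⦃i j k : ι⦄, i ≤ j → j ≤ k → T t i → T t k → T t j)
    (hfour : ∀ (i : ι) (t₁ t₂ t₃ t₄ : Fin 8), t₁ ≠ t₂ → t₁ ≠ t₃ → t₁ ≠ t₄ →
      t₂ ≠ t₃ → t₂ ≠ t₄ → t₃ ≠ t₄ → T t₁ i → T t₂ i → T t₃ i → T t₄ i → False)
    {α1 α3 m1 m2 m3 β1 β2 β3 : ι}
    (hα1 : T 0 α1) (hα3 : T 0 α3)
    (hm1 : T 2 m1 ∧ T 3 m1) (hm2 : T 4 m2 ∧ T 5 m2) (hm3 : T 6 m3 ∧ T 7 m3)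
    (hβ1 : T 3 β1 ∧ T 1 β1) (hβ2 : T 5 β2 ∧ T 1 β2) (hβ3 : T 7 β3 ∧ T 1 β3)
    (h12 : m1 ≤ m2) (h23 : m2 ≤ m3)
    (hstrad : (α1 ≤ m2 ∧ m2 ≤ α3) ∨ (α3 ≤ m2 ∧ m2 ≤ α1)) : False := by
  have hX2 : T 4 m2 := hm2.1
  have hY2 : T 5 m2 := hm2.2
  have hA : T 0 m2 := by
    rcases hstrad with ⟨h, h'⟩ | ⟨h, h'⟩
    · exact hint 0 h h' hα1 hα3
    · exact hint 0 h h' hα3 hα1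
  rcases le_total β1 m2 with hb1 | hb1
  · rcases le_total β3 m2 with hb3 | hb3
    · have hY3 : T 7 m2 := hint 7 hb3 h23 hβ3.1 hm3.2
      exact hfour m2 4 5 0 7 (by decide) (by decide) (by decide) (by decide) (by decide)
        (by decide) hX2 hY2 hA hY3
    · have hB : T 1 m2 := hint 1 hb1 hb3 hβ1.2 hβ3.2
      exact hfour m2 4 5 0 1 (by decide) (by decide) (by decide) (by decide) (by decide)
        (by decide) hX2 hY2 hA hB
  · rcases le_total β3 m2 with hb3 | hb3
    · have hB : T 1 m2 := hint 1 hb3 hb1 hβ3.2 hβ1.2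
      exact hfour m2 4 5 0 1 (by decide) (by decide) (by decide) (by decide) (by decide)
        (by decide) hX2 hY2 hA hB
    · have hY1 : T 3 m2 := hint 3 h12 hb1 hm1.2 hβ1.1
      exact hfour m2 4 5 0 3 (by decide) (by decide) (by decide) (by decide) (by decide)
        (by decide) hX2 hY2 hA hY1

/-- swap branches 1 and 3 -/
private def π13 : Fin 8 → Fin 8 := ![0, 1, 6, 7, 4, 5, 2, 3]

private lemma π13_inj : Function.Injective π13 := by decide

lemma theta_aux {ι : Type} [LinearOrder ι] (T : Fin 8 → ι → Prop)
    (hint : ∀ t : Fin 8, ∀ ⦃i j k : ι⦄, i ≤ j → j ≤ k → T t i → T t k → T t j)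
    (hfour : ∀ (i : ι) (t₁ t₂ t₃ t₄ : Fin 8), t₁ ≠ t₂ → t₁ ≠ t₃ → t₁ ≠ t₄ →
      t₂ ≠ t₃ → t₂ ≠ t₄ → t₃ ≠ t₄ → T t₁ i → T t₂ i → T t₃ i → T t₄ i → False)
    {α1 α2 α3 m1 m2 m3 β1 β2 β3 : ι}
    (hα1 : T 0 α1 ∧ T 2 α1) (hα2 : T 0 α2 ∧ T 4 α2) (hα3 : T 0 α3 ∧ T 6 α3)
    (hm1 : T 2 m1 ∧ T 3 m1) (hm2 : T 4 m2 ∧ T 5 m2) (hm3 : T 6 m3 ∧ T 7 m3)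
    (hβ1 : T 3 β1 ∧ T 1 β1) (hβ2 : T 5 β2 ∧ T 1 β2) (hβ3 : T 7 β3 ∧ T 1 β3)
    (h12 : m1 ≤ m2) (h23 : m2 ≤ m3) : False := by
  rcases le_total α1 m2 with ha1 | ha1
  · rcases le_total α3 m2 with ha3 | ha3
    · exact theta_core T hint hfour hα1 hα2 hα3 hm1 hm2 hm3 hβ1 hβ2 hβ3 h12 h23 ha1 ha3
    · exact theta_straddle T hint hfour hα1.1 hα3.1 hm1 hm2 hm3 hβ1 hβ2 hβ3 h12 h23
        (Or.inl ⟨ha1, ha3⟩)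
  · rcases le_total α3 m2 with ha3 | ha3
    · exact theta_straddle T hint hfour hα1.1 hα3.1 hm1 hm2 hm3 hβ1 hβ2 hβ3 h12 h23
        (Or.inr ⟨ha3, ha1⟩)
    · -- both ≥ m2 : dual order with branches 1,3 swapped
      let T' : Fin 8 → ιᵒᵈ → Prop := fun t i => T (π13 t) (OrderDual.ofDual i)
      have hint' : ∀ t : Fin 8, ∀ ⦃i j k : ιᵒᵈ⦄, i ≤ j → j ≤ k → T' t i → T' t k → T' t j :=
        fun t i j k hij hjk ti tk => hint (π13 t) hjk hij tk ti
      have hfour' : ∀ (i : ιᵒᵈ) (t₁ t₂ t₃ t₄ : Fin 8), t₁ ≠ t₂ → t₁ ≠ t₃ → t₁ ≠ t₄ →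
          t₂ ≠ t₃ → t₂ ≠ t₄ → t₃ ≠ t₄ → T' t₁ i → T' t₂ i → T' t₃ i → T' t₄ i → False :=
        fun i t₁ t₂ t₃ t₄ h12' h13 h14 h23' h24 h34 a b c d =>
          hfour (OrderDual.ofDual i) (π13 t₁) (π13 t₂) (π13 t₃) (π13 t₄)
            (fun e => h12' (π13_inj e)) (fun e => h13 (π13_inj e)) (fun e => h14 (π13_inj e))
            (fun e => h23' (π13_inj e)) (fun e => h24 (π13_inj e)) (fun e => h34 (π13_inj e))
            a b c d
      exact theta_core (ι := ιᵒᵈ) T' hint' hfour'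
        (α1 := OrderDual.toDual α3) (α2 := OrderDual.toDual α2) (α3 := OrderDual.toDual α1)
        (m1 := OrderDual.toDual m3) (m2 := OrderDual.toDual m2) (m3 := OrderDual.toDual m1)
        (β1 := OrderDual.toDual β3) (β2 := OrderDual.toDual β2) (β3 := OrderDual.toDual β1)
        ⟨hα3.1, hα3.2⟩ ⟨hα2.1, hα2.2⟩ ⟨hα1.1, hα1.2⟩
        ⟨hm3.1, hm3.2⟩ ⟨hm2.1, hm2.2⟩ ⟨hm1.1, hm1.2⟩
        ⟨hβ3.1, hβ3.2⟩ ⟨hβ2.1, hβ2.2⟩ ⟨hβ1.1, hβ1.2⟩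
        h23 h12 ha3 ha1

end Theta
section ThetaMain

variable {V : Type u} {G : SimpleGraph V}

private lemma hint_comp {ι : Type} [LinearOrder ι] (T : Fin 8 → ι → Prop) (π : Fin 8 → Fin 8)
    (hint : ∀ t : Fin 8, ∀ ⦃i j k : ι⦄, i ≤ j → j ≤ k → T t i → T t k → T t j) :
    ∀ t : Fin 8, ∀ ⦃i j k : ι⦄, i ≤ j → j ≤ k →
      T (π t) i → T (π t) k → T (π t) j :=
  fun t _ _ _ hij hjk a b => hint (π t) hij hjk a b

private lemma hfour_comp {ι : Type} [LinearOrder ι] (T : Fin 8 → ι → Prop) (π : Fin 8 → Fin 8)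
    (hπ : Function.Injective π)
    (hfour : ∀ (i : ι) (t₁ t₂ t₃ t₄ : Fin 8), t₁ ≠ t₂ → t₁ ≠ t₃ → t₁ ≠ t₄ →
      t₂ ≠ t₃ → t₂ ≠ t₄ → t₃ ≠ t₄ → T t₁ i → T t₂ i → T t₃ i → T t₄ i → False) :
    ∀ (i : ι) (t₁ t₂ t₃ t₄ : Fin 8), t₁ ≠ t₂ → t₁ ≠ t₃ → t₁ ≠ t₄ →
      t₂ ≠ t₃ → t₂ ≠ t₄ → t₃ ≠ t₄ →
      T (π t₁) i → T (π t₂) i → T (π t₃) i → T (π t₄) i → False :=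
  fun i t₁ t₂ t₃ t₄ h12 h13 h14 h23 h24 h34 a b c d =>
    hfour i (π t₁) (π t₂) (π t₃) (π t₄) (fun e => h12 (hπ e)) (fun e => h13 (hπ e))
      (fun e => h14 (hπ e)) (fun e => h23 (hπ e)) (fun e => h24 (hπ e))
      (fun e => h34 (hπ e)) a b c d

lemma theta_main {ι : Type} [LinearOrder ι] (T : Fin 8 → ι → Prop)
    (hint : ∀ t : Fin 8, ∀ ⦃i j k : ι⦄, i ≤ j → j ≤ k → T t i → T t k → T t j)
    (hfour : ∀ (i : ι) (t₁ t₂ t₃ t₄ : Fin 8), t₁ ≠ t₂ → t₁ ≠ t₃ → t₁ ≠ t₄ →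
      t₂ ≠ t₃ → t₂ ≠ t₄ → t₃ ≠ t₄ → T t₁ i → T t₂ i → T t₃ i → T t₄ i → False)
    (h02 : ∃ i, T 0 i ∧ T 2 i) (h23 : ∃ i, T 2 i ∧ T 3 i) (h31 : ∃ i, T 3 i ∧ T 1 i)
    (h04 : ∃ i, T 0 i ∧ T 4 i) (h45 : ∃ i, T 4 i ∧ T 5 i) (h51 : ∃ i, T 5 i ∧ T 1 i)
    (h06 : ∃ i, T 0 i ∧ T 6 i) (h67 : ∃ i, T 6 i ∧ T 7 i) (h71 : ∃ i, T 7 i ∧ T 1 i) :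
    False := by
  obtain ⟨α1, hα1⟩ := h02
  obtain ⟨m1, hm1⟩ := h23
  obtain ⟨β1, hβ1⟩ := h31
  obtain ⟨α2, hα2⟩ := h04
  obtain ⟨m2, hm2⟩ := h45
  obtain ⟨β2, hβ2⟩ := h51
  obtain ⟨α3, hα3⟩ := h06
  obtain ⟨m3, hm3⟩ := h67
  obtain ⟨β3, hβ3⟩ := h71
  have hβ1' : T 3 β1 ∧ T 1 β1 := ⟨hβ1.1, hβ1.2⟩
  have hβ2' : T 5 β2 ∧ T 1 β2 := ⟨hβ2.1, hβ2.2⟩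
  have hβ3' : T 7 β3 ∧ T 1 β3 := ⟨hβ3.1, hβ3.2⟩
  rcases le_total m1 m2 with h12 | h21
  · rcases le_total m2 m3 with h23' | h32
    · exact theta_aux T hint hfour hα1 hα2 hα3 hm1 hm2 hm3 hβ1' hβ2' hβ3' h12 h23'
    · rcases le_total m1 m3 with h13 | h31'
      · -- order m1 m3 m2 : π = ![0,1,2,3,6,7,4,5]
        exact theta_aux (fun t i => T (![0,1,2,3,6,7,4,5] t) i)
          (hint_comp T _ hint) (hfour_comp T _ (by decide) hfour)
          hα1 hα3 hα2 hm1 hm3 hm2 hβ1' hβ3' hβ2' h13 h32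
      · -- order m3 m1 m2 : π = ![0,1,6,7,2,3,4,5]
        exact theta_aux (fun t i => T (![0,1,6,7,2,3,4,5] t) i)
          (hint_comp T _ hint) (hfour_comp T _ (by decide) hfour)
          hα3 hα1 hα2 hm3 hm1 hm2 hβ3' hβ1' hβ2' h31' h12
  · rcases le_total m1 m3 with h13 | h31'
    · -- order m2 m1 m3 : π = ![0,1,4,5,2,3,6,7]
      exact theta_aux (fun t i => T (![0,1,4,5,2,3,6,7] t) i)
        (hint_comp T _ hint) (hfour_comp T _ (by decide) hfour)
        hα2 hα1 hα3 hm2 hm1 hm3 hβ2' hβ1' hβ3' h21 h13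
    · rcases le_total m2 m3 with h23' | h32
      · -- order m2 m3 m1 : π = ![0,1,4,5,6,7,2,3]
        exact theta_aux (fun t i => T (![0,1,4,5,6,7,2,3] t) i)
          (hint_comp T _ hint) (hfour_comp T _ (by decide) hfour)
          hα2 hα3 hα1 hm2 hm3 hm1 hβ2' hβ3' hβ1' h23' h31'
      · -- order m3 m2 m1 : π = ![0,1,6,7,4,5,2,3]
        exact theta_aux (fun t i => T (![0,1,6,7,4,5,2,3] t) i)
          (hint_comp T _ hint) (hfour_comp T _ (by decide) hfour)
          hα3 hα2 hα1 hm3 hm2 hm1 hβ3' hβ2' hβ1' h32 h21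

end ThetaMain
section Bags

variable {V : Type u} {G : SimpleGraph V}

/-- Bag-level theta obstruction. -/
lemma theta_bags (D : PathDecomp G) (hcard : ∀ i, (D.bag i).card ≤ 3)
    (St : Fin 8 → Set V) (hw : ∀ t, Wkb G (St t))
    (hdisj : ∀ t t' : Fin 8, t ≠ t' → ∀ v, v ∈ St t → v ∈ St t' → False)
    (h02 : ∃ u ∈ St 0, ∃ v ∈ St 2, G.Adj u v)
    (h23 : ∃ u ∈ St 2, ∃ v ∈ St 3, G.Adj u v)
    (h31 : ∃ u ∈ St 3, ∃ v ∈ St 1, G.Adj u v)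
    (h04 : ∃ u ∈ St 0, ∃ v ∈ St 4, G.Adj u v)
    (h45 : ∃ u ∈ St 4, ∃ v ∈ St 5, G.Adj u v)
    (h51 : ∃ u ∈ St 5, ∃ v ∈ St 1, G.Adj u v)
    (h06 : ∃ u ∈ St 0, ∃ v ∈ St 6, G.Adj u v)
    (h67 : ∃ u ∈ St 6, ∃ v ∈ St 7, G.Adj u v)
    (h71 : ∃ u ∈ St 7, ∃ v ∈ St 1, G.Adj u v) : False := by
  classical
  set T : Fin 8 → Fin D.n → Prop := fun t i => ∃ x ∈ D.bag i, x ∈ St t with hT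
  have hint : ∀ t : Fin 8, ∀ ⦃i j k : Fin D.n⦄, i ≤ j → j ≤ k → T t i → T t k → T t j :=
    fun t i j k hij hjk a b => touch_int D (hw t) hij hjk a b
  have hfour : ∀ (i : Fin D.n) (t₁ t₂ t₃ t₄ : Fin 8), t₁ ≠ t₂ → t₁ ≠ t₃ → t₁ ≠ t₄ →
      t₂ ≠ t₃ → t₂ ≠ t₄ → t₃ ≠ t₄ → T t₁ i → T t₂ i → T t₃ i → T t₄ i → False := by
    intro i t₁ t₂ t₃ t₄ h12 h13 h14 h23 h24 h34 ⟨x1, hx1, hx1'⟩ ⟨x2, hx2, hx2'⟩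
      ⟨x3, hx3, hx3'⟩ ⟨x4, hx4, hx4'⟩
    have hc := hcard i
    have h4 : 4 ≤ (D.bag i).card := by
      refine four_le_card hx1 hx2 hx3 hx4 ?_ ?_ ?_ ?_ ?_ ?_
      · rintro rfl; exact hdisj t₁ t₂ h12 x1 hx1' hx2'
      · rintro rfl; exact hdisj t₁ t₃ h13 x1 hx1' hx3'
      · rintro rfl; exact hdisj t₁ t₄ h14 x1 hx1' hx4'
      · rintro rfl; exact hdisj t₂ t₃ h23 x2 hx2' hx3'
      · rintro rfl; exact hdisj t₂ t₄ h24 x2 hx2' hx4'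
      · rintro rfl; exact hdisj t₃ t₄ h34 x3 hx3' hx4'
    omega
  have co : ∀ (s t : Fin 8), (∃ u ∈ St s, ∃ v ∈ St t, G.Adj u v) →
      ∃ i, T s i ∧ T t i := by
    rintro s t ⟨u, hu, v, hv, hadj⟩
    obtain ⟨i, hui, hvi⟩ := D.edge_bag hadj
    exact ⟨i, ⟨u, hui, hu⟩, ⟨v, hvi, hv⟩⟩
  exact theta_main T hint hfour (co _ _ h02) (co _ _ h23) (co _ _ h31) (co _ _ h04)
    (co _ _ h45) (co _ _ h51) (co _ _ h06) (co _ _ h67) (co _ _ h71)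

/-- Bag-level K4 obstruction: helper with `i4` dominating. -/
lemma clique_aux (D : PathDecomp G)
    (S1 S2 S3 S4 : Set V) (hw1 : Wkb G S1) (hw2 : Wkb G S2) (hw3 : Wkb G S3)
    {i1 i2 i3 i4 : Fin D.n}
    (ht1 : ∃ x ∈ D.bag i1, x ∈ S1) (ht2 : ∃ x ∈ D.bag i2, x ∈ S2)
    (ht3 : ∃ x ∈ D.bag i3, x ∈ S3) (ht4 : ∃ x ∈ D.bag i4, x ∈ S4)
    (h14 : i1 ≤ i4) (h24 : i2 ≤ i4) (h34 : i3 ≤ i4)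
    (hm1 : ∃ m, i4 ≤ m ∧ (∃ x ∈ D.bag m, x ∈ S1))
    (hm2 : ∃ m, i4 ≤ m ∧ (∃ x ∈ D.bag m, x ∈ S2))
    (hm3 : ∃ m, i4 ≤ m ∧ (∃ x ∈ D.bag m, x ∈ S3)) :
    ∃ j, (∃ x ∈ D.bag j, x ∈ S1) ∧ (∃ x ∈ D.bag j, x ∈ S2) ∧
      (∃ x ∈ D.bag j, x ∈ S3) ∧ (∃ x ∈ D.bag j, x ∈ S4) := by
  obtain ⟨m1, hm1le, hm1t⟩ := hm1
  obtain ⟨m2, hm2le, hm2t⟩ := hm2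
  obtain ⟨m3, hm3le, hm3t⟩ := hm3
  exact ⟨i4, touch_int D hw1 h14 hm1le ht1 hm1t, touch_int D hw2 h24 hm2le ht2 hm2t,
    touch_int D hw3 h34 hm3le ht3 hm3t, ht4⟩

end Bags
section Clique4

variable {V : Type u} {G : SimpleGraph V}

lemma clique4_bags (D : PathDecomp G) (hcard : ∀ i, (D.bag i).card ≤ 3)
    (S1 S2 S3 S4 : Set V)
    (hw1 : Wkb G S1) (hw2 : Wkb G S2) (hw3 : Wkb G S3) (hw4 : Wkb G S4)
    (hd12 : ∀ v, v ∈ S1 → v ∈ S2 → False) (hd13 : ∀ v, v ∈ S1 → v ∈ S3 → False)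
    (hd14 : ∀ v, v ∈ S1 → v ∈ S4 → False) (hd23 : ∀ v, v ∈ S2 → v ∈ S3 → False)
    (hd24 : ∀ v, v ∈ S2 → v ∈ S4 → False) (hd34 : ∀ v, v ∈ S3 → v ∈ S4 → False)
    (e12 : ∃ u ∈ S1, ∃ v ∈ S2, G.Adj u v) (e13 : ∃ u ∈ S1, ∃ v ∈ S3, G.Adj u v)
    (e14 : ∃ u ∈ S1, ∃ v ∈ S4, G.Adj u v) (e23 : ∃ u ∈ S2, ∃ v ∈ S3, G.Adj u v)
    (e24 : ∃ u ∈ S2, ∃ v ∈ S4, G.Adj u v) (e34 : ∃ u ∈ S3, ∃ v ∈ S4, G.Adj u v) :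
    False := by
  classical
  have co : ∀ (S S' : Set V), (∃ u ∈ S, ∃ v ∈ S', G.Adj u v) →
      ∃ i, (∃ x ∈ D.bag i, x ∈ S) ∧ (∃ x ∈ D.bag i, x ∈ S') := by
    rintro S S' ⟨u, hu, v, hv, hadj⟩
    obtain ⟨i, hui, hvi⟩ := D.edge_bag hadj
    exact ⟨i, ⟨u, hui, hu⟩, ⟨v, hvi, hv⟩⟩
  obtain ⟨c12, hc12⟩ := co _ _ e12
  obtain ⟨c13, hc13⟩ := co _ _ e13
  obtain ⟨c14, hc14⟩ := co _ _ e14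
  obtain ⟨c23, hc23⟩ := co _ _ e23
  obtain ⟨c24, hc24⟩ := co _ _ e24
  obtain ⟨c34, hc34⟩ := co _ _ e34
  set F1 : Finset (Fin D.n) := Finset.univ.filter (fun i => ∃ x ∈ D.bag i, x ∈ S1) with hF1
  set F2 : Finset (Fin D.n) := Finset.univ.filter (fun i => ∃ x ∈ D.bag i, x ∈ S2) with hF2
  set F3 : Finset (Fin D.n) := Finset.univ.filter (fun i => ∃ x ∈ D.bag i, x ∈ S3) with hF3
  set F4 : Finset (Fin D.n) := Finset.univ.filter (fun i => ∃ x ∈ D.bag i, x ∈ S4) with hF4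
  have hne1 : F1.Nonempty := ⟨c12, by simp [hF1, hc12.1]⟩
  have hne2 : F2.Nonempty := ⟨c12, by simp [hF2, hc12.2]⟩
  have hne3 : F3.Nonempty := ⟨c34, by simp [hF3, hc34.1]⟩
  have hne4 : F4.Nonempty := ⟨c34, by simp [hF4, hc34.2]⟩
  set a1 := F1.min' hne1
  set a2 := F2.min' hne2
  set a3 := F3.min' hne3
  set a4 := F4.min' hne4
  have t1 : ∃ x ∈ D.bag a1, x ∈ S1 := by
    exact (Finset.mem_filter.mp (F1.min'_mem hne1)).2
  have t2 : ∃ x ∈ D.bag a2, x ∈ S2 := by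
    exact (Finset.mem_filter.mp (F2.min'_mem hne2)).2
  have t3 : ∃ x ∈ D.bag a3, x ∈ S3 := by
    exact (Finset.mem_filter.mp (F3.min'_mem hne3)).2
  have t4 : ∃ x ∈ D.bag a4, x ∈ S4 := by
    exact (Finset.mem_filter.mp (F4.min'_mem hne4)).2
  have le1 : ∀ m : Fin D.n, (∃ x ∈ D.bag m, x ∈ S1) → a1 ≤ m :=
    fun m hm => Finset.min'_le _ _ (by simp [hF1, hm])
  have le2 : ∀ m : Fin D.n, (∃ x ∈ D.bag m, x ∈ S2) → a2 ≤ m :=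
    fun m hm => Finset.min'_le _ _ (by simp [hF2, hm])
  have le3 : ∀ m : Fin D.n, (∃ x ∈ D.bag m, x ∈ S3) → a3 ≤ m :=
    fun m hm => Finset.min'_le _ _ (by simp [hF3, hm])
  have le4 : ∀ m : Fin D.n, (∃ x ∈ D.bag m, x ∈ S4) → a4 ≤ m :=
    fun m hm => Finset.min'_le _ _ (by simp [hF4, hm])
  have finish : ∀ j : Fin D.n, (∃ x ∈ D.bag j, x ∈ S1) → (∃ x ∈ D.bag j, x ∈ S2) →
      (∃ x ∈ D.bag j, x ∈ S3) → (∃ x ∈ D.bag j, x ∈ S4) → False := by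
    rintro j ⟨x1, hx1, hx1'⟩ ⟨x2, hx2, hx2'⟩ ⟨x3, hx3, hx3'⟩ ⟨x4, hx4, hx4'⟩
    have h4 : 4 ≤ (D.bag j).card := by
      refine four_le_card hx1 hx2 hx3 hx4 ?_ ?_ ?_ ?_ ?_ ?_
      · rintro rfl; exact hd12 x1 hx1' hx2'
      · rintro rfl; exact hd13 x1 hx1' hx3'
      · rintro rfl; exact hd14 x1 hx1' hx4'
      · rintro rfl; exact hd23 x2 hx2' hx3'
      · rintro rfl; exact hd24 x2 hx2' hx4'
      · rintro rfl; exact hd34 x3 hx3' hx4'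
    have := hcard j; omega
  rcases le_total a1 a2 with h12 | h21 <;> rcases le_total a3 a4 with h34 | h43
  · rcases le_total a2 a4 with h24 | h42
    · obtain ⟨j, hA, hB, hC, hD⟩ := clique_aux D S1 S2 S3 S4 hw1 hw2 hw3 t1 t2 t3 t4
        (le_trans h12 h24) h24 h34
        ⟨c14, le4 _ hc14.2, hc14.1⟩ ⟨c24, le4 _ hc24.2, hc24.1⟩ ⟨c34, le4 _ hc34.2, hc34.1⟩
      exact finish j hA hB hC hD
    · obtain ⟨j, hA, hB, hC, hD⟩ := clique_aux D S1 S3 S4 S2 hw1 hw3 hw4 t1 t3 t4 t2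
        h12 (le_trans h34 h42) h42
        ⟨c12, le2 _ hc12.2, hc12.1⟩ ⟨c23, le2 _ (by exact ⟨_, hc23.1.choose_spec.1, hc23.1.choose_spec.2⟩), hc23.2⟩
        ⟨c24, le2 _ hc24.1, hc24.2⟩
      exact finish j hA hD hB hC
  · rcases le_total a2 a3 with h23 | h32
    · obtain ⟨j, hA, hB, hC, hD⟩ := clique_aux D S1 S2 S4 S3 hw1 hw2 hw4 t1 t2 t4 t3
        (le_trans h12 h23) h23 h43
        ⟨c13, le3 _ hc13.2, hc13.1⟩ ⟨c23, le3 _ hc23.2, hc23.1⟩ ⟨c34, le3 _ hc34.1, hc34.2⟩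
      exact finish j hA hB hD hC
    · obtain ⟨j, hA, hB, hC, hD⟩ := clique_aux D S1 S3 S4 S2 hw1 hw3 hw4 t1 t3 t4 t2
        h12 h32 (le_trans h43 h32)
        ⟨c12, le2 _ hc12.2, hc12.1⟩ ⟨c23, le2 _ hc23.1, hc23.2⟩ ⟨c24, le2 _ hc24.1, hc24.2⟩
      exact finish j hA hD hB hC
  · rcases le_total a1 a4 with h14 | h41
    · obtain ⟨j, hA, hB, hC, hD⟩ := clique_aux D S1 S2 S3 S4 hw1 hw2 hw3 t1 t2 t3 t4
        h14 (le_trans h21 h14) h34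
        ⟨c14, le4 _ hc14.2, hc14.1⟩ ⟨c24, le4 _ hc24.2, hc24.1⟩ ⟨c34, le4 _ hc34.2, hc34.1⟩
      exact finish j hA hB hC hD
    · obtain ⟨j, hA, hB, hC, hD⟩ := clique_aux D S2 S3 S4 S1 hw2 hw3 hw4 t2 t3 t4 t1
        h21 (le_trans h34 h41) h41
        ⟨c12, le1 _ hc12.1, hc12.2⟩ ⟨c13, le1 _ hc13.1, hc13.2⟩ ⟨c14, le1 _ hc14.1, hc14.2⟩
      exact finish j hD hA hB hC
  · rcases le_total a1 a3 with h13 | h31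
    · obtain ⟨j, hA, hB, hC, hD⟩ := clique_aux D S1 S2 S4 S3 hw1 hw2 hw4 t1 t2 t4 t3
        h13 (le_trans h21 h13) h43
        ⟨c13, le3 _ hc13.2, hc13.1⟩ ⟨c23, le3 _ hc23.2, hc23.1⟩ ⟨c34, le3 _ hc34.1, hc34.2⟩
      exact finish j hA hB hD hC
    · obtain ⟨j, hA, hB, hC, hD⟩ := clique_aux D S2 S3 S4 S1 hw2 hw3 hw4 t2 t3 t4 t1
        h21 h31 (le_trans h43 h31)
        ⟨c12, le1 _ hc12.1, hc12.2⟩ ⟨c13, le1 _ hc13.1, hc13.2⟩ ⟨c14, le1 _ hc14.1, hc14.2⟩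
      exact finish j hD hA hB hC
  
end Clique4
section WalkHelpers

variable {V : Type u} {G : SimpleGraph V}

lemma tail_ne_nil_of_not_nil {x : V} {p : G.Walk x x} (hp : ¬p.Nil) :
    p.support.tail ≠ [] := by
  have hlen : p.support.length = p.length + 1 := Walk.length_support p
  have : 0 < p.length := Walk.not_nil_iff_lt_length.mp hp
  intro h
  have h2 := congrArg List.length h
  rw [List.length_tail, hlen] at h2
  simp only [List.length_nil] at h2
  omega

lemma mem_support_iff_mem_tail {x v : V} {p : G.Walk x x} (hp : ¬p.Nil) :
    v ∈ p.support ↔ v ∈ p.support.tail := by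
  constructor
  · intro h
    rcases (Walk.mem_support_iff p).mp h with rfl | h'
    · have htne := tail_ne_nil_of_not_nil hp
      have key : ∀ (l : List V), l.tail ≠ [] → l.getLast? = some v → l = v :: l.tail →
          v ∈ l.tail := by
        rintro (_ | ⟨w, l⟩) hl hg hcons
        · simp at hg
        · simp only [List.tail_cons] at hl hcons ⊢
          rw [List.getLast?_eq_getLast (by simp), List.getLast_cons hl] at hg
          have := List.getLast_mem hl
          rwa [Option.some_inj.mp hg] at this
      refine key p.support htne ?_ (Walk.support_eq_cons p)
      rw [List.getLast?_eq_getLast (by simp), Walk.getLast_support p]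
    · exact h'
  · intro h; exact List.mem_of_mem_tail h

lemma mem_rotate_support [DecidableEq V] {x u v : V} {c : G.Walk x x} (hc : c.IsCycle)
    (h : u ∈ c.support) : v ∈ (c.rotate u h).support ↔ v ∈ c.support := by
  have h1 : ¬c.Nil := hc.not_nil
  have h2 : ¬(c.rotate u h).Nil := (hc.rotate h).not_nil
  rw [mem_support_iff_mem_tail h1, mem_support_iff_mem_tail h2]
  exact (Walk.support_rotate c u h).mem_iff

lemma length_rotate [DecidableEq V] {x u : V} (c : G.Walk x x) (h : u ∈ c.support) :
    (c.rotate u h).length = c.length := by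
  have h1 := congrArg Walk.length (c.take_spec h)
  rw [Walk.length_append] at h1
  rw [Walk.rotate, Walk.length_append]
  omega

lemma glue_cycle {a b : V} (hab : a ≠ b) (R : G.Walk a b) (P : G.Walk b a)
    (hR : R.support.Nodup) (hP : P.support.Nodup)
    (hint : ∀ v, v ∈ R.support → v ∈ P.support → v = a ∨ v = b)
    (hedge : ∀ e, e ∈ R.edges → e ∈ P.edges → False) : (R.append P).IsCycle := by
  have hRcons := Walk.support_eq_cons R
  have hPcons := Walk.support_eq_cons P
  have hRt : a ∉ R.support.tail ∧ R.support.tail.Nodup := by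
    rw [hRcons] at hR; exact List.nodup_cons.mp hR
  have hPt : b ∉ P.support.tail ∧ P.support.tail.Nodup := by
    rw [hPcons] at hP; exact List.nodup_cons.mp hP
  rw [Walk.isCycle_def]
  refine ⟨⟨?_⟩, ?_, ?_⟩
  · rw [Walk.edges_append]
    exact List.Nodup.append (Walk.edges_nodup_of_support_nodup hR)
      (Walk.edges_nodup_of_support_nodup hP) (fun e he he' => hedge e he he')
  · intro hnil
    have := congrArg Walk.length hnil
    rw [Walk.length_append] at this
    have hR0 : 0 < R.length := Walk.not_nil_iff_lt_length.mp (Walk.not_nil_of_ne hab)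
    simp only [Walk.length_nil] at this; omega
  · rw [Walk.tail_support_append]
    refine List.Nodup.append hRt.2 hPt.2 ?_
    intro v hv hv'
    have hvR : v ∈ R.support := List.mem_of_mem_tail hv
    have hvP : v ∈ P.support := List.mem_of_mem_tail hv'
    rcases hint v hvR hvP with rfl | rfl
    · exact hRt.1 hv
    · exact hPt.1 hv'

/-- Split the interior of a long path into a first vertex and the rest. -/
lemma arc_pack {a b : V} (P : G.Walk a b) (hnd : P.support.Nodup) (hlen : 3 ≤ P.length) :
    ∃ (x : V) (Y : Set V), G.Adj a x ∧ (∃ y ∈ Y, G.Adj x y) ∧ (∃ y ∈ Y, G.Adj y b) ∧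
      Wkb G Y ∧ x ∈ P.support.tail ∧ (∀ y ∈ Y, y ∈ P.support.tail.tail) ∧
      x ∉ Y ∧ b ∉ Y ∧ a ∉ Y ∧ a ≠ x ∧ x ≠ b := by
  have h1 : ¬P.Nil := by rw [Walk.not_nil_iff_lt_length]; omega
  have hTlen := Walk.length_tail_add_one h1
  have h2 : ¬P.tail.Nil := by rw [Walk.not_nil_iff_lt_length]; omega
  have hQlen := Walk.length_tail_add_one h2
  have h3 : ¬P.tail.tail.Nil := by rw [Walk.not_nil_iff_lt_length]; omega
  set x := P.getVert 1 with hx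
  set Q := P.tail.tail with hQ
  have hT : P.tail.support = P.support.tail := Walk.support_tail_of_not_nil P h1
  have hL : Q.support = P.support.tail.tail := by
    rw [hQ, Walk.support_tail_of_not_nil P.tail h2, hT]
  have hTnd : a ∉ P.support.tail ∧ P.support.tail.Nodup := by
    rw [Walk.support_eq_cons P] at hnd; exact List.nodup_cons.mp hnd
  have hxT : x ∈ P.support.tail := by
    rw [← hT]; exact Walk.start_mem_support P.tail
  have hTcons : P.support.tail = x :: P.support.tail.tail := by
    have h5 := Walk.support_eq_cons P.tail
    rw [hT] at h5
    exact h5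
  have hLnd : x ∉ P.support.tail.tail ∧ P.support.tail.tail.Nodup := by
    rw [hTcons] at hTnd; exact List.nodup_cons.mp hTnd.2
  have h4 : ¬Q.reverse.Nil := by
    rw [Walk.not_nil_iff_lt_length, Walk.length_reverse]
    rw [Walk.not_nil_iff_lt_length] at h3; exact h3
  set Rw := Q.reverse.tail.reverse with hRw
  set Y : Set V := {v | v ∈ Rw.support} with hY
  have hRwsup : Rw.support = Q.reverse.support.tail.reverse := by
    rw [hRw, Walk.support_reverse, Walk.support_tail_of_not_nil _ h4]
  have hYsub : ∀ y ∈ Y, y ∈ P.support.tail.tail := by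
    intro y hy
    rw [hY, Set.mem_setOf_eq, hRwsup, List.mem_reverse] at hy
    have : y ∈ Q.reverse.support := List.mem_of_mem_tail hy
    rw [Walk.support_reverse, List.mem_reverse, hL] at this
    exact this
  have hbY : b ∉ Y := by
    intro hb
    rw [hY, Set.mem_setOf_eq, hRwsup, List.mem_reverse] at hb
    have hQr : Q.reverse.support = b :: Q.reverse.support.tail := Walk.support_eq_cons Q.reverse
    have : Q.reverse.support.Nodup := by
      rw [Walk.support_reverse, List.nodup_reverse, hL]; exact hLnd.2
    rw [hQr] at this
    exact (List.nodup_cons.mp this).1 hb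
  refine ⟨x, Y, Walk.adj_snd h1, ?_, ?_, ?_, hxT, hYsub, ?_, hbY, ?_, ?_, ?_⟩
  · -- x adjacent to first vertex of Y
    refine ⟨P.tail.getVert 1, ?_, ?_⟩
    · rw [hY, Set.mem_setOf_eq, hRw]
      exact Walk.start_mem_support _
    · exact Walk.adj_snd h2
  · -- last vertex of Y adjacent to b
    refine ⟨Q.reverse.getVert 1, ?_, ?_⟩
    · rw [hY, Set.mem_setOf_eq, hRw]
      exact Walk.end_mem_support _
    · exact (Walk.adj_snd h4).symm
  · exact wkb_of_walk Rw
  · intro hxY; exact hLnd.1 (hYsub x hxY)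
  · intro haY; exact hTnd.1 (List.mem_of_mem_tail (hYsub a haY))
  · intro hax
    refine hTnd.1 ?_
    have h6 := hxT
    rw [← hax] at h6
    exact h6
  · intro hxb
    have hbL : b ∈ P.support.tail.tail := by rw [← hL]; exact Walk.end_mem_support Q
    refine hLnd.1 ?_
    rw [hxb]; exact hbL

lemma mem_dropUntil_or [DecidableEq V] :
    ∀ {x y : V} (p : G.Walk x y) (b c : V) (hb : b ∈ p.support) (hc : c ∈ p.support),
      c ∈ (p.dropUntil b hb).support ∨ b ∈ (p.dropUntil c hc).support := by
  intro x y p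
  induction p with
  | nil =>
    intro b c hb hc
    have hb' := Walk.mem_support_nil_iff.mp hb
    have hc' := Walk.mem_support_nil_iff.mp hc
    subst hb'; subst hc'
    left; exact Walk.start_mem_support _
  | @cons u v w hadj q ih =>
    intro b c hb hc
    by_cases hub : u = b
    · subst hub; left
      have he : (Walk.cons hadj q).dropUntil u hb = Walk.cons hadj q := by
        simp [Walk.dropUntil]
      rw [he]; exact hc
    · by_cases huc : u = c
      · subst huc; right
        have he : (Walk.cons hadj q).dropUntil u hc = Walk.cons hadj q := by
          simp [Walk.dropUntil]
        rw [he]; exact hb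
      · have hb' : b ∈ q.support := by
          rcases List.mem_cons.mp (by simpa using hb) with h | h
          · exact absurd h.symm hub
          · exact h
        have hc' : c ∈ q.support := by
          rcases List.mem_cons.mp (by simpa using hc) with h | h
          · exact absurd h.symm huc
          · exact h
        have heb : (Walk.cons hadj q).dropUntil b hb = q.dropUntil b hb' := by
          simp [Walk.dropUntil, hub]
        have hec : (Walk.cons hadj q).dropUntil c hc = q.dropUntil c hc' := by
          simp [Walk.dropUntil, huc]
        rw [heb, hec]
        exact ih b c hb' hc'

end WalkHelpers
section Split

variable {V : Type u} {G : SimpleGraph V}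

lemma support_tail_ne_nil {x y : V} {p : G.Walk x y} (hp : ¬p.Nil) :
    p.support.tail ≠ [] := by
  have hlen : p.support.length = p.length + 1 := Walk.length_support p
  have h0 : 0 < p.length := Walk.not_nil_iff_lt_length.mp hp
  intro h
  have h2 := congrArg List.length h
  rw [List.length_tail, hlen] at h2
  simp only [List.length_nil] at h2
  omega

lemma end_mem_support_tail {x y : V} (p : G.Walk x y) (hp : ¬p.Nil) :
    y ∈ p.support.tail := by
  have htne := support_tail_ne_nil hp
  have key : ∀ (l : List V), l.tail ≠ [] → l.getLast? = some y → l = x :: l.tail →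
      y ∈ l.tail := by
    rintro (_ | ⟨w, l⟩) hl hg hcons
    · simp at hg
    · simp only [List.tail_cons] at hl ⊢
      rw [List.getLast?_eq_getLast (by simp), List.getLast_cons hl] at hg
      have := List.getLast_mem hl
      rwa [Option.some_inj.mp hg] at this
  refine key p.support htne ?_ (Walk.support_eq_cons p)
  rw [List.getLast?_eq_getLast (by simp), Walk.getLast_support p]

/-- Facts about splitting a cycle `C0 : Walk a a` at a vertex `b ≠ a`. -/
lemma split_cycle [DecidableEq V] {a b : V} {C0 : G.Walk a a} (hC0 : C0.IsCycle)
    (hb : b ∈ C0.support) (hab : a ≠ b) :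
    C0.support.tail = (C0.takeUntil b hb).support.tail ++ (C0.dropUntil b hb).support.tail ∧
    (C0.takeUntil b hb).support.Nodup ∧ (C0.dropUntil b hb).support.Nodup ∧
    b ∈ (C0.takeUntil b hb).support.tail ∧ a ∈ (C0.dropUntil b hb).support.tail ∧
    (∀ v, v ∈ (C0.takeUntil b hb).support → v ∈ (C0.dropUntil b hb).support →
      v = a ∨ v = b) ∧
    (C0.takeUntil b hb).length + (C0.dropUntil b hb).length = C0.length := by
  set P1 := C0.takeUntil b hb with hP1
  set P2 := C0.dropUntil b hb with hP2
  have htail : C0.support.tail = P1.support.tail ++ P2.support.tail := by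
    rw [← Walk.tail_support_append, Walk.take_spec]
  have hnd : (P1.support.tail ++ P2.support.tail).Nodup := by
    rw [← htail]; exact hC0.support_nodup
  have hnd' := List.nodup_append.mp hnd
  have hP1nil : ¬P1.Nil := Walk.not_nil_of_ne hab
  have hP2nil : ¬P2.Nil := Walk.not_nil_of_ne (Ne.symm hab)
  have hbt1 : b ∈ P1.support.tail := end_mem_support_tail P1 hP1nil
  have hat2 : a ∈ P2.support.tail := end_mem_support_tail P2 hP2nil
  have hant1 : a ∉ P1.support.tail := fun ha => hnd'.2.2 _ ha _ hat2 rfl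
  have hbnt2 : b ∉ P2.support.tail := fun hbb => hnd'.2.2 _ hbt1 _ hbb rfl
  have hP1nd : P1.support.Nodup := by
    rw [Walk.support_eq_cons P1]
    exact List.nodup_cons.mpr ⟨hant1, hnd'.1⟩
  have hP2nd : P2.support.Nodup := by
    rw [Walk.support_eq_cons P2]
    exact List.nodup_cons.mpr ⟨hbnt2, hnd'.2.1⟩
  refine ⟨htail, hP1nd, hP2nd, hbt1, hat2, ?_, ?_⟩
  · intro v hv1 hv2
    by_contra hcon
    push_neg at hcon
    have hv1' : v ∈ P1.support.tail := by
      rcases (Walk.mem_support_iff P1).mp hv1 with rfl | h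
      · exact absurd rfl hcon.1
      · exact h
    have hv2' : v ∈ P2.support.tail := by
      rcases (Walk.mem_support_iff P2).mp hv2 with rfl | h
      · exact absurd rfl hcon.2
      · exact h
    exact hnd'.2.2 _ hv1' _ hv2' rfl
  · have := congrArg Walk.length (C0.take_spec hb)
    rw [Walk.length_append] at this
    exact this

lemma mem_support_of_mem_edge {x y u : V} (p : G.Walk x y) (e : Sym2 V)
    (he : e ∈ p.edges) (hu : u ∈ e) : u ∈ p.support := by
  induction e with
  | _ s t =>
    rcases Sym2.mem_iff.mp hu with rfl | rfl
    · exact Walk.fst_mem_support_of_mem_edges p he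
    · exact Walk.snd_mem_support_of_mem_edges p he

end Split
section Bags8

variable {V : Type u} {G : SimpleGraph V}

lemma theta_bags8 (D : PathDecomp G) (hcard : ∀ i, (D.bag i).card ≤ 3)
    (S0 S1 S2 S3 S4 S5 S6 S7 : Set V)
    (w0 : Wkb G S0) (w1 : Wkb G S1) (w2 : Wkb G S2) (w3 : Wkb G S3)
    (w4 : Wkb G S4) (w5 : Wkb G S5) (w6 : Wkb G S6) (w7 : Wkb G S7)
    (d01 : ∀ v, v ∈ S0 → v ∈ S1 → False)
    (d02 : ∀ v, v ∈ S0 → v ∈ S2 → False)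
    (d03 : ∀ v, v ∈ S0 → v ∈ S3 → False)
    (d04 : ∀ v, v ∈ S0 → v ∈ S4 → False)
    (d05 : ∀ v, v ∈ S0 → v ∈ S5 → False)
    (d06 : ∀ v, v ∈ S0 → v ∈ S6 → False)
    (d07 : ∀ v, v ∈ S0 → v ∈ S7 → False)
    (d12 : ∀ v, v ∈ S1 → v ∈ S2 → False)
    (d13 : ∀ v, v ∈ S1 → v ∈ S3 → False)
    (d14 : ∀ v, v ∈ S1 → v ∈ S4 → False)
    (d15 : ∀ v, v ∈ S1 → v ∈ S5 → False)
    (d16 : ∀ v, v ∈ S1 → v ∈ S6 → False)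
    (d17 : ∀ v, v ∈ S1 → v ∈ S7 → False)
    (d23 : ∀ v, v ∈ S2 → v ∈ S3 → False)
    (d24 : ∀ v, v ∈ S2 → v ∈ S4 → False)
    (d25 : ∀ v, v ∈ S2 → v ∈ S5 → False)
    (d26 : ∀ v, v ∈ S2 → v ∈ S6 → False)
    (d27 : ∀ v, v ∈ S2 → v ∈ S7 → False)
    (d34 : ∀ v, v ∈ S3 → v ∈ S4 → False)
    (d35 : ∀ v, v ∈ S3 → v ∈ S5 → False)
    (d36 : ∀ v, v ∈ S3 → v ∈ S6 → False)
    (d37 : ∀ v, v ∈ S3 → v ∈ S7 → False)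
    (d45 : ∀ v, v ∈ S4 → v ∈ S5 → False)
    (d46 : ∀ v, v ∈ S4 → v ∈ S6 → False)
    (d47 : ∀ v, v ∈ S4 → v ∈ S7 → False)
    (d56 : ∀ v, v ∈ S5 → v ∈ S6 → False)
    (d57 : ∀ v, v ∈ S5 → v ∈ S7 → False)
    (d67 : ∀ v, v ∈ S6 → v ∈ S7 → False)
    (e02 : ∃ u ∈ S0, ∃ v ∈ S2, G.Adj u v)
    (e23 : ∃ u ∈ S2, ∃ v ∈ S3, G.Adj u v)
    (e31 : ∃ u ∈ S3, ∃ v ∈ S1, G.Adj u v)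
    (e04 : ∃ u ∈ S0, ∃ v ∈ S4, G.Adj u v)
    (e45 : ∃ u ∈ S4, ∃ v ∈ S5, G.Adj u v)
    (e51 : ∃ u ∈ S5, ∃ v ∈ S1, G.Adj u v)
    (e06 : ∃ u ∈ S0, ∃ v ∈ S6, G.Adj u v)
    (e67 : ∃ u ∈ S6, ∃ v ∈ S7, G.Adj u v)
    (e71 : ∃ u ∈ S7, ∃ v ∈ S1, G.Adj u v) : False := by
  classical
  have hdisj : ∀ t t' : Fin 8, t ≠ t' → ∀ v,
      v ∈ (![S0,S1,S2,S3,S4,S5,S6,S7] t) → v ∈ (![S0,S1,S2,S3,S4,S5,S6,S7] t') → False := by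
    intro t t' hne v hv hv'
    fin_cases t <;> fin_cases t'
    · exact absurd rfl hne
    · exact d01 v hv hv'
    · exact d02 v hv hv'
    · exact d03 v hv hv'
    · exact d04 v hv hv'
    · exact d05 v hv hv'
    · exact d06 v hv hv'
    · exact d07 v hv hv'
    · exact d01 v hv' hv
    · exact absurd rfl hne
    · exact d12 v hv hv'
    · exact d13 v hv hv'
    · exact d14 v hv hv'
    · exact d15 v hv hv'
    · exact d16 v hv hv'
    · exact d17 v hv hv'
    · exact d02 v hv' hv
    · exact d12 v hv' hv
    · exact absurd rfl hne
    · exact d23 v hv hv'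
    · exact d24 v hv hv'
    · exact d25 v hv hv'
    · exact d26 v hv hv'
    · exact d27 v hv hv'
    · exact d03 v hv' hv
    · exact d13 v hv' hv
    · exact d23 v hv' hv
    · exact absurd rfl hne
    · exact d34 v hv hv'
    · exact d35 v hv hv'
    · exact d36 v hv hv'
    · exact d37 v hv hv'
    · exact d04 v hv' hv
    · exact d14 v hv' hv
    · exact d24 v hv' hv
    · exact d34 v hv' hv
    · exact absurd rfl hne
    · exact d45 v hv hv'
    · exact d46 v hv hv'
    · exact d47 v hv hv'
    · exact d05 v hv' hv
    · exact d15 v hv' hv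
    · exact d25 v hv' hv
    · exact d35 v hv' hv
    · exact d45 v hv' hv
    · exact absurd rfl hne
    · exact d56 v hv hv'
    · exact d57 v hv hv'
    · exact d06 v hv' hv
    · exact d16 v hv' hv
    · exact d26 v hv' hv
    · exact d36 v hv' hv
    · exact d46 v hv' hv
    · exact d56 v hv' hv
    · exact absurd rfl hne
    · exact d67 v hv hv'
    · exact d07 v hv' hv
    · exact d17 v hv' hv
    · exact d27 v hv' hv
    · exact d37 v hv' hv
    · exact d47 v hv' hv
    · exact d57 v hv' hv
    · exact d67 v hv' hv
    · exact absurd rfl hne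
  exact theta_bags D hcard ![S0,S1,S2,S3,S4,S5,S6,S7]
    (fun t => by fin_cases t <;> assumption) hdisj e02 e23 e31 e04 e45 e51 e06 e67 e71

end Bags8
section ThreeLegs

variable {V : Type u} {G : SimpleGraph V}

lemma no_three_legs [DecidableEq V] (D : PathDecomp G) (hcard : ∀ i, (D.bag i).card ≤ 3)
    {a b c : V} (C0 : G.Walk a a) (hC0 : C0.IsCycle)
    (hb : b ∈ C0.support) (hab : a ≠ b) (hac : a ≠ c) (hbc : b ≠ c)
    (hcQ : c ∈ (C0.dropUntil b hb).support)
    (N : Set V) (hwN : Wkb G N) (hNdisj : ∀ v ∈ N, v ∉ C0.support)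
    (haN : ∃ m ∈ N, G.Adj a m) (hbN : ∃ m ∈ N, G.Adj b m) (hcN : ∃ m ∈ N, G.Adj c m) :
    False := by
  obtain ⟨htail, hP1nd, hQnd, hbt1, hat', hdisjPQ, hlen⟩ := split_cycle hC0 hb hab
  set P1 := C0.takeUntil b hb with hP1def
  set Q := C0.dropUntil b hb with hQdef
  -- split Q at c
  have htailQ : Q.support.tail = (Q.takeUntil c hcQ).support.tail ++
      (Q.dropUntil c hcQ).support.tail := by
    rw [← Walk.tail_support_append, Walk.take_spec]
  set P2 := Q.takeUntil c hcQ with hP2def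
  set P3 := Q.dropUntil c hcQ with hP3def
  have hndQ : Q.support.tail.Nodup := by
    rw [Walk.support_eq_cons Q] at hQnd
    exact (List.nodup_cons.mp hQnd).2
  have hnd23 : (P2.support.tail ++ P3.support.tail).Nodup := by rw [← htailQ]; exact hndQ
  have hnd23' := List.nodup_append.mp hnd23
  have hndfull : (P1.support.tail ++ Q.support.tail).Nodup := by
    rw [← htail]; exact hC0.support_nodup
  have hndfull' := List.nodup_append.mp hndfull
  have hP2nil : ¬P2.Nil := Walk.not_nil_of_ne hbc
  have hP3nil : ¬P3.Nil := Walk.not_nil_of_ne (Ne.symm hac)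
  have hP1nil : ¬P1.Nil := Walk.not_nil_of_ne hab
  have hct2 : c ∈ P2.support.tail := end_mem_support_tail P2 hP2nil
  have hat3 : a ∈ P3.support.tail := end_mem_support_tail P3 hP3nil
  -- walkable versions of the three arcs
  have ht1 : P1.tail.support = P1.support.tail := Walk.support_tail_of_not_nil P1 hP1nil
  have ht2 : P2.tail.support = P2.support.tail := Walk.support_tail_of_not_nil P2 hP2nil
  have ht3 : P3.tail.support = P3.support.tail := Walk.support_tail_of_not_nil P3 hP3nil
  set A1 : Set V := {v | v ∈ P1.support.tail} with hA1
  set A2 : Set V := {v | v ∈ P2.support.tail} with hA2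
  set A3 : Set V := {v | v ∈ P3.support.tail} with hA3
  have hwA1 : Wkb G A1 := by rw [hA1, ← ht1]; exact wkb_of_walk P1.tail
  have hwA2 : Wkb G A2 := by rw [hA2, ← ht2]; exact wkb_of_walk P2.tail
  have hwA3 : Wkb G A3 := by rw [hA3, ← ht3]; exact wkb_of_walk P3.tail
  -- subsets of the cycle support
  have hsub1 : ∀ v ∈ A1, v ∈ C0.support := by
    intro v hv
    exact Walk.support_takeUntil_subset C0 hb (List.mem_of_mem_tail hv)
  have hsubQ : ∀ v, v ∈ Q.support → v ∈ C0.support :=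
    fun v hv => Walk.support_dropUntil_subset C0 hb hv
  have hsub2 : ∀ v ∈ A2, v ∈ C0.support := by
    intro v hv
    exact hsubQ v (Walk.support_takeUntil_subset Q hcQ (List.mem_of_mem_tail hv))
  have hsub3 : ∀ v ∈ A3, v ∈ C0.support := by
    intro v hv
    exact hsubQ v (Walk.support_dropUntil_subset Q hcQ (List.mem_of_mem_tail hv))
  -- disjointness
  have hd12 : ∀ v, v ∈ A1 → v ∈ A2 → False := by
    intro v hv hv'
    exact hndfull'.2.2 _ hv _ (by rw [htailQ]; exact List.mem_append.mpr (Or.inl hv')) rfl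
  have hd13 : ∀ v, v ∈ A1 → v ∈ A3 → False := by
    intro v hv hv'
    exact hndfull'.2.2 _ hv _ (by rw [htailQ]; exact List.mem_append.mpr (Or.inr hv')) rfl
  have hd23 : ∀ v, v ∈ A2 → v ∈ A3 → False := fun v hv hv' => hnd23'.2.2 _ hv _ hv' rfl
  have hd1N : ∀ v, v ∈ A1 → v ∈ N → False := fun v hv hv' => hNdisj v hv' (hsub1 v hv)
  have hd2N : ∀ v, v ∈ A2 → v ∈ N → False := fun v hv hv' => hNdisj v hv' (hsub2 v hv)
  have hd3N : ∀ v, v ∈ A3 → v ∈ N → False := fun v hv hv' => hNdisj v hv' (hsub3 v hv)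
  -- adjacencies
  have hmem_b1 : b ∈ A1 := hbt1
  have hmem_c2 : c ∈ A2 := hct2
  have hmem_a3 : a ∈ A3 := hat3
  have e12 : ∃ u ∈ A1, ∃ v ∈ A2, G.Adj u v := by
    refine ⟨b, hmem_b1, P2.getVert 1, ?_, Walk.adj_snd hP2nil⟩
    rw [hA2, Set.mem_setOf_eq, ← ht2]; exact Walk.start_mem_support P2.tail
  have e23 : ∃ u ∈ A2, ∃ v ∈ A3, G.Adj u v := by
    refine ⟨c, hmem_c2, P3.getVert 1, ?_, Walk.adj_snd hP3nil⟩
    rw [hA3, Set.mem_setOf_eq, ← ht3]; exact Walk.start_mem_support P3.tail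
  have e13 : ∃ u ∈ A1, ∃ v ∈ A3, G.Adj u v := by
    refine ⟨P1.getVert 1, ?_, a, hmem_a3, (Walk.adj_snd hP1nil).symm⟩
    rw [hA1, Set.mem_setOf_eq, ← ht1]; exact Walk.start_mem_support P1.tail
  have e1N : ∃ u ∈ A1, ∃ v ∈ N, G.Adj u v := by
    obtain ⟨m, hm, hadj⟩ := hbN
    exact ⟨b, hmem_b1, m, hm, hadj⟩
  have e2N : ∃ u ∈ A2, ∃ v ∈ N, G.Adj u v := by
    obtain ⟨m, hm, hadj⟩ := hcN
    exact ⟨c, hmem_c2, m, hm, hadj⟩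
  have e3N : ∃ u ∈ A3, ∃ v ∈ N, G.Adj u v := by
    obtain ⟨m, hm, hadj⟩ := haN
    exact ⟨a, hmem_a3, m, hm, hadj⟩
  exact clique4_bags D hcard A1 A2 A3 N hwA1 hwA2 hwA3 hwN hd12 hd13 hd1N hd23 hd2N hd3N
    e12 e13 e1N e23 e2N e3N

end ThreeLegs
section BigBridge

variable {V : Type u} {G : SimpleGraph V}

lemma no_big_bridge [DecidableEq V] (D : PathDecomp G) (hcard : ∀ i, (D.bag i).card ≤ 3)
    {a b : V} (C0 : G.Walk a a) (hC0 : C0.IsCycle) (hb : b ∈ C0.support) (hab : a ≠ b)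
    (hlong : ∀ (y : V) (E : G.Walk y y), E.IsCycle → E.length ≤ C0.length)
    (R : G.Walk a b) (hRnd : R.support.Nodup) (hRlen : 3 ≤ R.length)
    (hRint : ∀ v, v ∈ R.support → v ≠ a → v ≠ b → v ∉ C0.support)
    (hRedge : ∀ e ∈ R.edges, ∃ v, v ∈ e ∧ v ∈ R.support ∧ v ≠ a ∧ v ≠ b) : False := by
  obtain ⟨htail, hP1nd, hP2nd, hbt1, hat2, hPQ, hlen⟩ := split_cycle hC0 hb hab
  set P1 := C0.takeUntil b hb with hP1def
  set P2 := C0.dropUntil b hb with hP2def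
  have hsub1 : ∀ v, v ∈ P1.support → v ∈ C0.support :=
    fun v hv => Walk.support_takeUntil_subset C0 hb hv
  have hsub2 : ∀ v, v ∈ P2.support → v ∈ C0.support :=
    fun v hv => Walk.support_dropUntil_subset C0 hb hv
  -- first glued cycle : R ++ P2
  have hint1 : ∀ v, v ∈ R.support → v ∈ P2.support → v = a ∨ v = b := by
    intro v hv hv'
    by_contra hcon
    push_neg at hcon
    exact hRint v hv hcon.1 hcon.2 (hsub2 v hv')
  have hedge1 : ∀ e, e ∈ R.edges → e ∈ P2.edges → False := by
    intro e he he'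
    obtain ⟨v, hve, hvR, hva, hvb⟩ := hRedge e he
    exact hRint v hvR hva hvb (hsub2 v (mem_support_of_mem_edge P2 e he' hve))
  have cyc1 : (R.append P2).IsCycle := glue_cycle hab R P2 hRnd hP2nd hint1 hedge1
  have len1 : R.length + P2.length ≤ C0.length := by
    have := hlong a (R.append P2) cyc1
    rwa [Walk.length_append] at this
  have hP1len : 3 ≤ P1.length := by omega
  -- second glued cycle : P1 ++ R.reverse
  have hRrev_nd : R.reverse.support.Nodup := by
    rw [Walk.support_reverse]; exact List.nodup_reverse.mpr hRnd
  have hint2 : ∀ v, v ∈ P1.support → v ∈ R.reverse.support → v = a ∨ v = b := by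
    intro v hv hv'
    rw [Walk.support_reverse, List.mem_reverse] at hv'
    by_contra hcon
    push_neg at hcon
    exact hRint v hv' hcon.1 hcon.2 (hsub1 v hv)
  have hedge2 : ∀ e, e ∈ P1.edges → e ∈ R.reverse.edges → False := by
    intro e he he'
    rw [Walk.edges_reverse, List.mem_reverse] at he'
    obtain ⟨v, hve, hvR, hva, hvb⟩ := hRedge e he'
    exact hRint v hvR hva hvb (hsub1 v (mem_support_of_mem_edge P1 e he hve))
  have cyc2 : (P1.append R.reverse).IsCycle := glue_cycle hab P1 R.reverse hP1nd hRrev_nd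
    hint2 hedge2
  have len2 : P1.length + R.reverse.length ≤ C0.length := by
    have := hlong a (P1.append R.reverse) cyc2
    rwa [Walk.length_append] at this
  rw [Walk.length_reverse] at len2
  have hP2len : 3 ≤ P2.length := by omega
  -- arc packs
  obtain ⟨x1, Y1, a_x1, x1_Y1, Y1_b, wY1, hx1t, hY1sub, hx1nY1, hbnY1, hanY1, hax1, hx1b⟩ :=
    arc_pack P1 hP1nd hP1len
  have hP2r_nd : P2.reverse.support.Nodup := by
    rw [Walk.support_reverse]; exact List.nodup_reverse.mpr hP2nd
  have hP2r_len : 3 ≤ P2.reverse.length := by rw [Walk.length_reverse]; exact hP2len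
  obtain ⟨x2, Y2, a_x2, x2_Y2, Y2_b, wY2, hx2t, hY2sub, hx2nY2, hbnY2, hanY2, hax2, hx2b⟩ :=
    arc_pack P2.reverse hP2r_nd hP2r_len
  obtain ⟨x3, Y3, a_x3, x3_Y3, Y3_b, wY3, hx3t, hY3sub, hx3nY3, hbnY3, hanY3, hax3, hx3b⟩ :=
    arc_pack R hRnd hRlen
  -- membership translations
  have hx1P1 : x1 ∈ P1.support := List.mem_of_mem_tail hx1t
  have hY1P1 : ∀ v ∈ Y1, v ∈ P1.support :=
    fun v hv => List.mem_of_mem_tail (List.mem_of_mem_tail (hY1sub v hv))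
  have hx2P2 : x2 ∈ P2.support := by
    have : x2 ∈ P2.reverse.support := List.mem_of_mem_tail hx2t
    rwa [Walk.support_reverse, List.mem_reverse] at this
  have hY2P2 : ∀ v ∈ Y2, v ∈ P2.support := by
    intro v hv
    have : v ∈ P2.reverse.support :=
      List.mem_of_mem_tail (List.mem_of_mem_tail (hY2sub v hv))
    rwa [Walk.support_reverse, List.mem_reverse] at this
  have hx3R : x3 ∈ R.support := List.mem_of_mem_tail hx3t
  have hY3R : ∀ v ∈ Y3, v ∈ R.support :=
    fun v hv => List.mem_of_mem_tail (List.mem_of_mem_tail (hY3sub v hv))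
  have hx3C : x3 ∉ C0.support := hRint x3 hx3R (fun h => hax3 h.symm) hx3b
  have hY3C : ∀ v ∈ Y3, v ∉ C0.support := by
    intro v hv
    refine hRint v (hY3R v hv) ?_ ?_
    · rintro rfl; exact hanY3 hv
    · rintro rfl; exact hbnY3 hv
  have hY1a : ∀ v ∈ Y1, v ≠ a := by rintro v hv rfl; exact hanY1 hv
  have hY1b' : ∀ v ∈ Y1, v ≠ b := by rintro v hv rfl; exact hbnY1 hv
  have hY2a : ∀ v ∈ Y2, v ≠ a := by rintro v hv rfl; exact hanY2 hv
  have hY2b' : ∀ v ∈ Y2, v ≠ b := by rintro v hv rfl; exact hbnY2 hv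
  -- disjointness lemmas
  have dPQ : ∀ v, v ∈ P1.support → v ∈ P2.support → v ≠ a → v ≠ b → False := by
    intro v h1 h2 hva hvb
    rcases hPQ v h1 h2 with rfl | rfl
    · exact hva rfl
    · exact hvb rfl
  refine theta_bags8 D hcard {a} {b} {x1} Y1 {x2} Y2 {x3} Y3
    (wkb_singleton a) (wkb_singleton b) (wkb_singleton x1) wY1 (wkb_singleton x2) wY2
    (wkb_singleton x3) wY3
    ?_ ?_ ?_ ?_ ?_ ?_ ?_ ?_ ?_ ?_ ?_ ?_ ?_ ?_ ?_ ?_ ?_ ?_ ?_ ?_ ?_ ?_ ?_ ?_ ?_ ?_ ?_ ?_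
    ?_ ?_ ?_ ?_ ?_ ?_ ?_ ?_ ?_
  -- d01
  · intro v hv h'
    rw [Set.mem_singleton_iff] at hv h'
    subst hv; exact hab h'
  -- d02
  · intro v hv h'
    rw [Set.mem_singleton_iff] at hv h'
    subst hv; exact hax1 h'
  -- d03
  · intro v hv h'
    rw [Set.mem_singleton_iff] at hv
    subst hv; exact hanY1 h'
  -- d04
  · intro v hv h'
    rw [Set.mem_singleton_iff] at hv h'
    subst hv; exact hax2 h'
  -- d05
  · intro v hv h'
    rw [Set.mem_singleton_iff] at hv
    subst hv; exact hanY2 h'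
  -- d06
  · intro v hv h'
    rw [Set.mem_singleton_iff] at hv h'
    subst hv; exact hax3 h'
  -- d07
  · intro v hv h'
    rw [Set.mem_singleton_iff] at hv
    subst hv; exact hanY3 h'
  -- d12
  · intro v hv h'
    rw [Set.mem_singleton_iff] at hv h'
    subst hv; exact hx1b h'.symm
  -- d13
  · intro v hv h'
    rw [Set.mem_singleton_iff] at hv
    subst hv; exact hbnY1 h'
  -- d14
  · intro v hv h'
    rw [Set.mem_singleton_iff] at hv h'
    subst hv; exact hx2b h'.symm
  -- d15
  · intro v hv h'
    rw [Set.mem_singleton_iff] at hv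
    subst hv; exact hbnY2 h'
  -- d16
  · intro v hv h'
    rw [Set.mem_singleton_iff] at hv h'
    subst hv; exact hx3b h'.symm
  -- d17
  · intro v hv h'
    rw [Set.mem_singleton_iff] at hv
    subst hv; exact hbnY3 h'
  -- d23
  · intro v hv h'
    rw [Set.mem_singleton_iff] at hv
    subst hv; exact hx1nY1 h'
  -- d24
  · intro v hv h'
    rw [Set.mem_singleton_iff] at hv h'
    subst hv
    exact dPQ v hx1P1 (h' ▸ hx2P2) (fun h => hax1 h.symm) hx1b
  -- d25
  · intro v hv h'
    rw [Set.mem_singleton_iff] at hv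
    subst hv
    exact dPQ v hx1P1 (hY2P2 v h') (fun h => hax1 h.symm) hx1b
  -- d26
  · intro v hv h'
    rw [Set.mem_singleton_iff] at hv h'
    subst hv
    exact hx3C (h' ▸ hsub1 _ hx1P1)
  -- d27
  · intro v hv h'
    rw [Set.mem_singleton_iff] at hv
    subst hv
    exact hY3C v h' (hsub1 _ hx1P1)
  -- d34
  · intro v hv h'
    rw [Set.mem_singleton_iff] at h'
    exact dPQ v (hY1P1 _ hv) (h' ▸ hx2P2) (hY1a _ hv) (hY1b' _ hv)
  -- d35
  · intro v hv h'
    exact dPQ v (hY1P1 v hv) (hY2P2 v h') (hY1a v hv) (hY1b' v hv)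
  -- d36
  · intro v hv h'
    rw [Set.mem_singleton_iff] at h'
    subst h'
    exact hx3C (hsub1 _ (hY1P1 _ hv))
  -- d37
  · intro v hv h'
    exact hY3C v h' (hsub1 _ (hY1P1 _ hv))
  -- d45
  · intro v hv h'
    rw [Set.mem_singleton_iff] at hv
    subst hv; exact hx2nY2 h'
  -- d46
  · intro v hv h'
    rw [Set.mem_singleton_iff] at hv h'
    subst hv
    exact hx3C (h' ▸ hsub2 _ hx2P2)
  -- d47
  · intro v hv h'
    rw [Set.mem_singleton_iff] at hv
    subst hv
    exact hY3C v h' (hsub2 _ hx2P2)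
  -- d56
  · intro v hv h'
    rw [Set.mem_singleton_iff] at h'
    subst h'
    exact hx3C (hsub2 _ (hY2P2 _ hv))
  -- d57
  · intro v hv h'
    exact hY3C v h' (hsub2 _ (hY2P2 v hv))
  -- d67
  · intro v hv h'
    rw [Set.mem_singleton_iff] at hv
    subst hv; exact hx3nY3 h'
  -- e02
  · exact ⟨a, rfl, x1, rfl, a_x1⟩
  -- e23
  · obtain ⟨y, hy, hadj⟩ := x1_Y1; exact ⟨x1, rfl, y, hy, hadj⟩
  -- e31
  · obtain ⟨y, hy, hadj⟩ := Y1_b; exact ⟨y, hy, b, rfl, hadj⟩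
  -- e04
  · exact ⟨a, rfl, x2, rfl, a_x2⟩
  -- e45
  · obtain ⟨y, hy, hadj⟩ := x2_Y2; exact ⟨x2, rfl, y, hy, hadj⟩
  -- e51
  · obtain ⟨y, hy, hadj⟩ := Y2_b; exact ⟨y, hy, b, rfl, hadj⟩
  -- e06
  · exact ⟨a, rfl, x3, rfl, a_x3⟩
  -- e67
  · obtain ⟨y, hy, hadj⟩ := x3_Y3; exact ⟨x3, rfl, y, hy, hadj⟩
  -- e71
  · obtain ⟨y, hy, hadj⟩ := Y3_b; exact ⟨y, hy, b, rfl, hadj⟩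

end BigBridge


section MainAux

variable {V : Type u} {G : SimpleGraph V}

lemma exists_ne_of_len2 : ∀ (l : List V), l.Nodup → 2 ≤ l.length → ∀ v0 : V,
    ∃ u ∈ l, u ≠ v0 := by
  intro l hl h2 v0
  match l, hl, h2 with
  | u1 :: u2 :: tl, hl, _ =>
    by_cases h : u1 = v0
    · subst h
      refine ⟨u2, by simp, fun hh => ?_⟩
      subst hh
      exact (List.nodup_cons.mp hl).1 (by simp)
    · exact ⟨u1, by simp, h⟩

lemma exists_decomp [Fintype V] (G : SimpleGraph V) (hpw : pathWidth G ≤ 2) :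
    ∃ D : PathDecomp G, ∀ i, (D.bag i).card ≤ 3 := by
  classical
  have hne : {w | ∃ D : PathDecomp G, D.width = w}.Nonempty := by
    refine ⟨(PathDecomp.mk 1 (fun _ => Finset.univ) ?_ ?_ ?_ : PathDecomp G).width, _, rfl⟩
    · intro v; exact ⟨0, Finset.mem_univ v⟩
    · intro u w _; exact ⟨0, Finset.mem_univ u, Finset.mem_univ w⟩
    · intro i j k _ _ v _ _; exact Finset.mem_univ v
  have hmem := Nat.sInf_mem hne
  obtain ⟨D, hD⟩ := hmem
  refine ⟨D, fun i => ?_⟩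
  have h1 : D.width ≤ 2 := by rw [hD]; exact hpw
  have h2 : (D.bag i).card ≤ Finset.univ.sup fun j => (D.bag j).card :=
    Finset.le_sup (f := fun j => (D.bag j).card) (Finset.mem_univ i)
  unfold PathDecomp.width at h1
  omega

end MainAux

/-- Let `G` be a 2-connected finite simple graph with path-width at most 2 and
let `C` be a longest cycle of `G`. Then every bridge of `C` is trivial: a single edge joining
two vertices of `C`, or a path of length two between two vertices of `C` whose middle vertex
is not on `C`. -/
theorem bridge_is_trivial {V : Type u} [Fintype V] (G : SimpleGraph V)
    (h2 : TwoConnected G) (hpw : pathWidth G ≤ 2) {x : V} (C : G.Walk x x)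
    (hC : IsLongestCycle G C) (B : G.Subgraph) (hB : IsBridgeOf G C B) :
    (∃ (a b : V) (hab : G.Adj a b), a ∈ C.support ∧ b ∈ C.support ∧
        B = G.subgraphOfAdj hab) ∨
    (∃ (a m b : V) (h₁ : G.Adj a m) (h₂ : G.Adj m b), a ∈ C.support ∧ b ∈ C.support ∧
        m ∉ C.support ∧ B = G.subgraphOfAdj h₁ ⊔ G.subgraphOfAdj h₂) := by
  classical
  obtain ⟨hCyc, hlong⟩ := hC
  obtain ⟨D, hcard⟩ := exists_decomp G hpw
  rcases hB with ⟨N, hcomp, rfl⟩ | ⟨a, b, h, ha, hb, _, rfl⟩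
  swap
  · exact Or.inl ⟨a, b, h, ha, hb, rfl⟩
  obtain ⟨hNne, hNsubc, hNconn, hNclose⟩ := hcomp
  have hNdisj : ∀ v ∈ N, v ∉ C.support := fun v hv hvc => (hNsubc hv) hvc
  have hwN : Wkb G N := wkb_of_connected_induce hNconn
  have hclose : ∀ u ∈ N, ∀ w, G.Adj u w → w ∈ N ∨ w ∈ C.support := by
    intro u hu w hadj
    by_cases hw : w ∈ C.support
    · exact Or.inr hw
    · exact Or.inl (hNclose u hu w hw hadj)
  -- STEP A : two distinct attachments
  have hattach2 : ∃ p q : V, p ≠ q ∧ p ∈ C.support ∧ q ∈ C.support ∧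
      (∃ m ∈ N, G.Adj p m) ∧ (∃ m ∈ N, G.Adj q m) := by
    by_contra hno
    obtain ⟨m, hm⟩ := hNne
    have hAsub : ∃ v0 ∈ C.support, ∀ u ∈ C.support, (∃ m' ∈ N, G.Adj u m') → u = v0 := by
      by_cases hA : ∃ u ∈ C.support, ∃ m' ∈ N, G.Adj u m'
      · obtain ⟨u0, hu0c, hu0m⟩ := hA
        refine ⟨u0, hu0c, fun u huc hum => ?_⟩
        by_contra hne
        exact hno ⟨u, u0, hne, huc, hu0c, hum, hu0m⟩
      · push_neg at hA
        refine ⟨x, Walk.start_mem_support C, fun u huc hum => ?_⟩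
        obtain ⟨m', hm', hadj⟩ := hum
        exact absurd hadj (hA u huc m' hm')
    obtain ⟨v0, hv0c, hv0uniq⟩ := hAsub
    have hlen3 : 3 ≤ C.length := hCyc.three_le_length
    have htnd : C.support.tail.Nodup := hCyc.support_nodup
    have htlen : 2 ≤ C.support.tail.length := by
      rw [List.length_tail, Walk.length_support]; omega
    obtain ⟨c, hcmem, hcne⟩ := exists_ne_of_len2 _ htnd htlen v0
    have hcsupp : c ∈ C.support := List.mem_of_mem_tail hcmem
    have hmne : m ≠ v0 := fun hh => hNdisj m hm (hh ▸ hv0c)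
    obtain ⟨w⟩ := (h2.2 v0).preconnected
      ⟨m, by simp [hmne]⟩ ⟨c, by simp [hcne]⟩
    let f : G.induce ({v0}ᶜ : Set V) →g G := ⟨Subtype.val, fun {p q} hpq => hpq⟩
    set W := (w.map f).copy rfl rfl with hWdef
    have hW : ∀ z ∈ W.support, z ≠ v0 := by
      intro z hz
      rw [hWdef, Walk.support_copy, Walk.support_map] at hz
      obtain ⟨⟨z', hz'⟩, _, rfl⟩ := List.mem_map.mp hz
      exact hz'
    obtain ⟨d, hd, hdfst, hdsnd⟩ := W.exists_boundary_dart N hm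
      (fun hcN => hNdisj c hcN hcsupp)
    rcases hclose d.fst hdfst d.snd d.adj with hsndN | hsndC
    · exact hdsnd hsndN
    · have := hv0uniq d.snd hsndC ⟨d.fst, hdfst, d.adj.symm⟩
      exact hW d.snd (Walk.dart_snd_mem_support_of_mem_darts W hd) this
  obtain ⟨a, b, hab, haC, hbC, haN, hbN⟩ := hattach2
  -- rotate the cycle at `a`
  set C0 := C.rotate a haC with hC0def
  have hC0 : C0.IsCycle := hCyc.rotate haC
  have hmemC0 : ∀ v, v ∈ C0.support ↔ v ∈ C.support := fun v => mem_rotate_support hCyc haC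
  have hb0 : b ∈ C0.support := (hmemC0 b).mpr hbC
  have hlong0 : ∀ (y : V) (E : G.Walk y y), E.IsCycle → E.length ≤ C0.length := by
    intro y E hE
    rw [hC0def, length_rotate]
    exact hlong y E hE
  have hNdisj0 : ∀ v ∈ N, v ∉ C0.support := fun v hv hvc => hNdisj v hv ((hmemC0 v).mp hvc)
  -- STEP B : no third attachment
  have hA2 : ∀ v ∈ C.support, (∃ m ∈ N, G.Adj v m) → v = a ∨ v = b := by
    intro c hcsupp hcN
    by_contra hcon
    push_neg at hcon
    obtain ⟨hca, hcb⟩ := hcon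
    have hc0 : c ∈ C0.support := (hmemC0 c).mpr hcsupp
    rcases mem_dropUntil_or C0 b c hb0 hc0 with hq | hq
    · exact no_three_legs D hcard C0 hC0 hb0 hab (Ne.symm hca) (Ne.symm hcb) hq N hwN
        hNdisj0 haN hbN hcN
    · exact no_three_legs D hcard C0 hC0 hc0 (Ne.symm hca) hab hcb hq N hwN
        hNdisj0 haN hcN hbN
  -- STEP C : N is a single vertex
  have hNsing : ∀ m1 ∈ N, ∀ m2 ∈ N, m1 = m2 := by
    by_contra hnsing
    push_neg at hnsing
    obtain ⟨n1, hn1, n2, hn2, hn12⟩ := hnsing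
    -- two distinct feet in N
    have hsep : ∃ m1 ∈ N, ∃ m2 ∈ N, G.Adj a m1 ∧ G.Adj b m2 ∧ m1 ≠ m2 := by
      by_contra hnopair
      push_neg at hnopair
      obtain ⟨ma, hma, hadja⟩ := haN
      obtain ⟨mb, hmb, hadjb⟩ := hbN
      have hmamb : ma = mb := hnopair ma hma mb hmb hadja hadjb
      have hall : ∀ m' ∈ N, (G.Adj a m' ∨ G.Adj b m') → m' = ma := by
        intro m' hm' hattach
        rcases hattach with hadj' | hadj'
        · exact (hnopair m' hm' mb hmb hadj' hadjb).trans hmamb.symm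
        · exact (hnopair ma hma m' hm' hadja hadj').symm
      -- pick n' ∈ N, n' ≠ ma
      have hn' : ∃ n' ∈ N, n' ≠ ma := by
        by_cases h1 : n1 = ma
        · exact ⟨n2, hn2, fun hh => hn12 (h1.trans hh.symm)⟩
        · exact ⟨n1, hn1, h1⟩
      obtain ⟨n', hn', hn'ma⟩ := hn'
      have hane : a ≠ ma := fun hh => hNdisj ma hma (hh ▸ haC)
      obtain ⟨w⟩ := (h2.2 ma).preconnected
        ⟨n', by simp [hn'ma]⟩ ⟨a, by simp [hane]⟩
      let f : G.induce ({ma}ᶜ : Set V) →g G := ⟨Subtype.val, fun {p q} hpq => hpq⟩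
      set W := (w.map f).copy rfl rfl with hWdef
      have hW : ∀ z ∈ W.support, z ≠ ma := by
        intro z hz
        rw [hWdef, Walk.support_copy, Walk.support_map] at hz
        obtain ⟨⟨z', hz'⟩, _, rfl⟩ := List.mem_map.mp hz
        exact hz'
      have hn'S : n' ∈ N \ {ma} := ⟨hn', by simp [hn'ma]⟩
      have haS : a ∉ N \ {ma} := fun hh => hNdisj a hh.1 haC
      obtain ⟨d, hd, hdfst, hdsnd⟩ := W.exists_boundary_dart (N \ {ma}) hn'S haS
      rcases hclose d.fst hdfst.1 d.snd d.adj with hsndN | hsndC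
      · have : d.snd = ma := by
          by_contra hne
          exact hdsnd ⟨hsndN, by simp [hne]⟩
        exact hW d.snd (Walk.dart_snd_mem_support_of_mem_darts W hd) this
      · have hsnd_ab : d.snd = a ∨ d.snd = b :=
          hA2 d.snd hsndC ⟨d.fst, hdfst.1, d.adj.symm⟩
        have : d.fst = ma := by
          refine hall d.fst hdfst.1 ?_
          rcases hsnd_ab with rfl | rfl
          · exact Or.inl d.adj.symm
          · exact Or.inr d.adj.symm
        exact (by simp [this] : d.fst ∉ N \ {ma}) hdfst
    obtain ⟨m1, hm1, m2, hm2, hadj1, hadj2, hm12⟩ := hsep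
    -- path through N
    obtain ⟨q0, hq0⟩ := hwN m1 hm1 m2 hm2
    set q := q0.bypass with hqdef
    have hqpath : q.IsPath := Walk.bypass_isPath q0
    have hqsub : ∀ z ∈ q.support, z ∈ N := fun z hz =>
      hq0 z (Walk.support_bypass_subset q0 hz)
    have hqnil : ¬q.Nil := Walk.not_nil_of_ne hm12
    have hqlen : 1 ≤ q.length := Walk.not_nil_iff_lt_length.mp hqnil
    set R : G.Walk a b := Walk.cons hadj1 (q.concat hadj2.symm) with hRdef
    have hRsupp : R.support = a :: (q.support ++ [b]) := by
      rw [hRdef, Walk.support_cons, Walk.support_concat]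
    have hRnd : R.support.Nodup := by
      rw [hRsupp]
      refine List.nodup_cons.mpr ⟨?_, ?_⟩
      · intro hmem
        rcases List.mem_append.mp hmem with hqa | hba
        · exact hNdisj a (hqsub a hqa) haC
        · rw [List.mem_singleton] at hba
          exact hab hba
      · refine List.Nodup.append hqpath.support_nodup (List.nodup_singleton b) ?_
        intro z hz hz'
        rw [List.mem_singleton] at hz'
        subst hz'
        exact hNdisj z (hqsub z hz) hbC
    have hRlen : 3 ≤ R.length := by
      rw [hRdef, Walk.length_cons, Walk.length_concat]
      omega
    have hRint : ∀ v, v ∈ R.support → v ≠ a → v ≠ b → v ∉ C0.support := by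
      intro v hv hva hvb
      rw [hRsupp] at hv
      rcases List.mem_cons.mp hv with rfl | hv'
      · exact absurd rfl hva
      · rcases List.mem_append.mp hv' with hq' | hb'
        · exact hNdisj0 v (hqsub v hq')
        · rw [List.mem_singleton] at hb'
          exact absurd hb' hvb
    have hRedge : ∀ e ∈ R.edges, ∃ v, v ∈ e ∧ v ∈ R.support ∧ v ≠ a ∧ v ≠ b := by
      intro e he
      rw [hRdef, Walk.edges_cons, Walk.edges_concat] at he
      have hm1R : m1 ∈ R.support := by
        rw [hRsupp]
        exact List.mem_cons_of_mem _ (List.mem_append.mpr (Or.inl (Walk.start_mem_support q)))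
      have hm1a : m1 ≠ a := fun hh => hNdisj a (hh ▸ hm1) haC
      have hm1b : m1 ≠ b := fun hh => hNdisj b (hh ▸ hm1) hbC
      rcases List.mem_cons.mp he with rfl | he'
      · exact ⟨m1, Sym2.mem_mk_right a m1, hm1R, hm1a, hm1b⟩
      · rw [List.concat_eq_append, List.mem_append, List.mem_singleton] at he'
        rcases he' with heq | heb
        · induction e with
          | _ s t =>
            have hs : s ∈ q.support := Walk.fst_mem_support_of_mem_edges q heq
            have hsN : s ∈ N := hqsub s hs
            refine ⟨s, Sym2.mem_mk_left s t, ?_, ?_, ?_⟩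
            · rw [hRsupp]
              exact List.mem_cons_of_mem _ (List.mem_append.mpr (Or.inl hs))
            · exact fun hh => hNdisj a (hh ▸ hsN) haC
            · exact fun hh => hNdisj b (hh ▸ hsN) hbC
        · rw [heb]
          have hm2R : m2 ∈ R.support := by
            rw [hRsupp]
            exact List.mem_cons_of_mem _ (List.mem_append.mpr (Or.inl (Walk.end_mem_support q)))
          refine ⟨m2, Sym2.mem_mk_left m2 b, hm2R, ?_, ?_⟩
          · exact fun hh => hNdisj a (hh ▸ hm2) haC
          · exact fun hh => hNdisj b (hh ▸ hm2) hbC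
    exact no_big_bridge D hcard C0 hC0 hb0 hab hlong0 R hRnd hRlen hRint hRedge
  -- STEP D : conclude
  obtain ⟨m, hm⟩ := hNne
  have hNeq : N = {m} := by
    ext z
    simp only [Set.mem_singleton_iff]
    exact ⟨fun hz => hNsing z hz m hm, fun hz => hz ▸ hm⟩
  have hadjam : G.Adj a m := by
    obtain ⟨m', hm', hadj⟩ := haN
    rw [hNeq, Set.mem_singleton_iff] at hm'
    rwa [hm'] at hadj
  have hadjbm : G.Adj b m := by
    obtain ⟨m', hm', hadj⟩ := hbN
    rw [hNeq, Set.mem_singleton_iff] at hm'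
    rwa [hm'] at hadj
  have hmnC : m ∉ C.support := fun hh => hNdisj m hm hh
  have hnbr : ∀ w, G.Adj m w → w = a ∨ w = b := by
    intro w hadj
    rcases hclose m hm w hadj with hwN | hwC
    · rw [hNeq, Set.mem_singleton_iff] at hwN
      rw [hwN] at hadj
      exact absurd hadj (G.loopless.irrefl m)
    · exact hA2 w hwC ⟨m, hm, hadj.symm⟩
  refine Or.inr ⟨a, m, b, hadjam, hadjbm.symm, haC, hbC, hmnC, ?_⟩
  rw [hNeq]
  refine SimpleGraph.Subgraph.ext ?_ ?_
  · ext v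
    simp only [bridgeFromComp, SimpleGraph.Subgraph.verts_sup, SimpleGraph.subgraphOfAdj_verts,
      Set.mem_union, Set.mem_insert_iff, Set.mem_singleton_iff, Set.mem_setOf_eq]
    constructor
    · rintro ⟨w, hadj, hv | hw⟩
      · exact Or.inl (Or.inr hv)
      · subst hw
        rcases hnbr v hadj.symm with rfl | rfl
        · exact Or.inl (Or.inl rfl)
        · exact Or.inr (Or.inr rfl)
    · rintro ((rfl | rfl) | (rfl | rfl))
      · exact ⟨m, hadjam, Or.inr rfl⟩
      · exact ⟨a, hadjam.symm, Or.inl rfl⟩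
      · exact ⟨a, hadjam.symm, Or.inl rfl⟩
      · exact ⟨m, hadjbm, Or.inr rfl⟩
  · ext v w
    simp only [bridgeFromComp, SimpleGraph.Subgraph.sup_adj, SimpleGraph.subgraphOfAdj_adj,
      Set.mem_singleton_iff]
    constructor
    · rintro ⟨hadj, rfl | rfl⟩
      · rcases hnbr w hadj with rfl | rfl
        · exact Or.inl (Sym2.eq_swap)
        · exact Or.inr rfl
      · rcases hnbr v hadj.symm with rfl | rfl
        · exact Or.inl rfl
        · exact Or.inr (Sym2.eq_swap)
    · rintro (heq | heq)
      · rw [Sym2.eq_iff] at heq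
        rcases heq with ⟨rfl, rfl⟩ | ⟨rfl, rfl⟩
        · exact ⟨hadjam, Or.inr rfl⟩
        · exact ⟨hadjam.symm, Or.inl rfl⟩
      · rw [Sym2.eq_iff] at heq
        rcases heq with ⟨rfl, rfl⟩ | ⟨rfl, rfl⟩
        · exact ⟨hadjbm.symm, Or.inl rfl⟩
        · exact ⟨hadjbm, Or.inr rfl⟩
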